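/- arXiv:1207.6127 — 8 statements merged into one kernel-verified Lean document; each statement's English description precedes it below -/
import Mathlib

section
/- For every integer n ≥ 6, the metric dimension of the line graph of the wheel graph W_{1,n} equals n − ⌈n/3⌉, i.e., dim(L(W_{1,n})) = n − ⌈n/3⌉. -/
open SimpleGraph

variable {V : Type*}

/-- `W` is a resolving set of `G`: every pair of distinct vertices is resolved
by some vertex of `W` via graph distance. -/
def IsResolvingSet (G : SimpleGraph V) (W : Set V) : Prop :=
  ∀ u v : V, u ≠ v → ∃ w ∈ W, G.dist u w ≠ G.dist v w

/-- The metric dimension of `G`: minimum cardinality of a resolving set. -/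
noncomputable def metricDim (G : SimpleGraph V) : ℕ :=
  sInf {k | ∃ W : Set V, W.ncard = k ∧ IsResolvingSet G W}

/-- One global application of the zero-forcing color-change rule:
a black vertex `u` forces its unique white neighbor to become black. -/
def zfStep (G : SimpleGraph V) (S : Set V) : Set V :=
  S ∪ {v | ∃ u ∈ S, G.Adj u v ∧ ∀ w, G.Adj u w → w ∉ S → w = v}

/-- `S` is a zero forcing set of `G` if iterating the color-change rule
starting from `S` eventually turns all vertices black. -/
def IsZeroForcingSet (G : SimpleGraph V) (S : Set V) : Prop :=
  ∃ m : ℕ, (zfStep G)^[m] S = Set.univ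

/-- The zero forcing number of `G`: minimum cardinality of a zero forcing set. -/
noncomputable def zeroForcingNum (G : SimpleGraph V) : ℕ :=
  sInf {k | ∃ S : Set V, S.ncard = k ∧ IsZeroForcingSet G S}

/-- The wheel graph `W_{1,n} = C_n + K_1`: hub `none` joined to the cycle `C_n`
on vertices `some i`, `i : Fin n`. -/
def wheelGraph (n : ℕ) : SimpleGraph (Option (Fin n)) :=
  SimpleGraph.fromRel (fun u v =>
    match u, v with
    | none, some _ => True
    | some i, some j => ((i : ℕ) : ZMod n) + 1 = ((j : ℕ) : ZMod n)
    | _, _ => False)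

/-- The bouquet of `n` circles of lengths `k 0 + 1, …, k (n-1) + 1`: the cut
vertex is `none`; the `i`-th circle consists of `none` together with the vertices
`some ⟨i, j⟩`, `j : Fin (k i)`, in cyclic order. -/
def bouquet (n : ℕ) (k : Fin n → ℕ) : SimpleGraph (Option (Σ i : Fin n, Fin (k i))) :=
  SimpleGraph.fromRel (fun u v =>
    match u, v with
    | none, some a => (a.2 : ℕ) = 0 ∨ (a.2 : ℕ) = k a.1 - 1
    | some a, some b => a.1 = b.1 ∧ ((b.2 : ℕ) = (a.2 : ℕ) + 1)
    | _, _ => False)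

/-- The path cover number of `G`: the minimum number of vertex-disjoint induced
paths covering all the vertices of `G`. -/
noncomputable def pathCoverNum (G : SimpleGraph V) : ℕ :=
  sInf {m | ∃ f : V → Fin m, ∀ i : Fin m,
    ∃ k, 1 ≤ k ∧ Nonempty ((G.induce (f ⁻¹' {i})) ≃g SimpleGraph.pathGraph k)}

/-- `G` contains a Hamiltonian path. -/
def HasHamiltonianPath [DecidableEq V] (G : SimpleGraph V) : Prop :=
  ∃ (u v : V) (p : G.Walk u v), p.IsHamiltonian

set_option linter.unusedSectionVars false

namespace WheelLG

open SimpleGraph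

variable {n : ℕ} [NeZero n] [Fact (6 ≤ n)]

lemma hn6 : 6 ≤ n := Fact.out

lemma natCast_zmod_inj {a b : ℕ} (ha : a < n) (hb : b < n)
    (h : (a : ZMod n) = (b : ZMod n)) : a = b := by
  have := (ZMod.natCast_eq_natCast_iff' a b n).mp h
  rwa [Nat.mod_eq_of_lt ha, Nat.mod_eq_of_lt hb] at this

lemma natCast_ne_zero {c : ℕ} (h1 : 0 < c) (h2 : c < n) : (c : ZMod n) ≠ 0 := by
  intro h
  have := (ZMod.natCast_eq_zero_iff c n).mp h
  have := Nat.le_of_dvd h1 this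
  omega

lemma one_ne_zero' : (1 : ZMod n) ≠ 0 := by
  have := natCast_ne_zero (n := n) (c := 1) one_pos (by have := hn6 (n := n); omega)
  simpa using this

lemma two_ne_zero' : (2 : ZMod n) ≠ 0 := by
  have := natCast_ne_zero (n := n) (c := 2) (by omega) (by have := hn6 (n := n); omega)
  simpa using this

lemma three_ne_zero' : (3 : ZMod n) ≠ 0 := by
  have := natCast_ne_zero (n := n) (c := 3) (by omega) (by have := hn6 (n := n); omega)
  simpa using this

lemma four_ne_zero' : (4 : ZMod n) ≠ 0 := by
  have := natCast_ne_zero (n := n) (c := 4) (by omega) (by have := hn6 (n := n); omega)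
  simpa using this

/-- the cycle vertex with index `k : ZMod n` -/
def vtx (k : ZMod n) : Option (Fin n) := some ⟨k.val, k.val_lt⟩

lemma vtx_injective : Function.Injective (vtx (n := n)) := by
  intro a b h
  simp only [vtx, Option.some.injEq, Fin.mk.injEq] at h
  exact ZMod.val_injective n h

lemma vtx_ne_none (k : ZMod n) : vtx k ≠ none := by simp [vtx]

lemma wheel_adj_hub (k : ZMod n) : (wheelGraph n).Adj none (vtx k) := by
  rw [wheelGraph, SimpleGraph.fromRel_adj]
  exact ⟨(vtx_ne_none k).symm, Or.inl (by simp [vtx])⟩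

lemma wheel_adj_cyc {k l : ZMod n} (h : k + 1 = l) : (wheelGraph n).Adj (vtx k) (vtx l) := by
  have hkl : k ≠ l := by
    intro he; rw [he] at h; exact one_ne_zero' (by linear_combination h)
  rw [wheelGraph, SimpleGraph.fromRel_adj]
  refine ⟨fun hc => hkl (vtx_injective hc), Or.inl ?_⟩
  show ((k.val : ℕ) : ZMod n) + 1 = ((l.val : ℕ) : ZMod n)
  rw [ZMod.natCast_zmod_val, ZMod.natCast_zmod_val]; exact h

/-- spoke edges -/
def E (k : ZMod n) : (wheelGraph n).edgeSet :=
  ⟨s(none, vtx k), (wheelGraph n).mem_edgeSet.mpr (wheel_adj_hub k)⟩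

/-- cycle edges -/
def F (k : ZMod n) : (wheelGraph n).edgeSet :=
  ⟨s(vtx k, vtx (k + 1)), (wheelGraph n).mem_edgeSet.mpr (wheel_adj_cyc rfl)⟩

lemma E_injective : Function.Injective (E (n := n)) := by
  intro a b h
  simp only [E, Subtype.mk.injEq, Sym2.eq_iff] at h
  rcases h with ⟨-, h⟩ | ⟨h, -⟩
  · exact vtx_injective h
  · exact absurd h.symm (vtx_ne_none b)

lemma F_injective : Function.Injective (F (n := n)) := by
  intro a b h
  simp only [F, Subtype.mk.injEq, Sym2.eq_iff] at h
  rcases h with ⟨h, -⟩ | ⟨h1, h2⟩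
  · exact vtx_injective h
  · have h1 := vtx_injective h1
    have h2 := vtx_injective h2
    exfalso; exact two_ne_zero' (n := n) (by linear_combination h2 - h1)

lemma E_ne_F (a b : ZMod n) : E (n := n) a ≠ F b := by
  intro h
  simp only [E, F, Subtype.mk.injEq, Sym2.eq_iff] at h
  rcases h with ⟨h, -⟩ | ⟨h, -⟩
  · exact vtx_ne_none b h.symm
  · exact vtx_ne_none (b + 1) h.symm

lemma edge_cases (w : (wheelGraph n).edgeSet) : (∃ k, w = E k) ∨ (∃ k, w = F k) := by
  obtain ⟨e, he⟩ := w
  induction e with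
  | _ a b =>
    rw [SimpleGraph.mem_edgeSet, wheelGraph, SimpleGraph.fromRel_adj] at he
    obtain ⟨hne, hr⟩ := he
    have hvtx : ∀ (i : Fin n), some i = vtx (((i : ℕ) : ZMod n)) := by
      intro i
      simp [vtx, ZMod.val_cast_of_lt i.isLt]
    match a, b, hne, hr with
    | none, none, hne, _ => exact absurd rfl hne
    | none, some i, _, _ =>
      exact Or.inl ⟨((i : ℕ) : ZMod n), by simp only [E, Subtype.mk.injEq, hvtx i]⟩
    | some i, none, _, _ =>
      refine Or.inl ⟨((i : ℕ) : ZMod n), ?_⟩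
      simp only [E, Subtype.mk.injEq, ← hvtx i, Sym2.eq_swap]
    | some i, some j, hne, hr =>
      have hr' : ((i : ℕ) : ZMod n) + 1 = ((j : ℕ) : ZMod n)
          ∨ ((j : ℕ) : ZMod n) + 1 = ((i : ℕ) : ZMod n) := hr
      rcases hr' with h | h
      · refine Or.inr ⟨((i : ℕ) : ZMod n), ?_⟩
        simp only [F, Subtype.mk.injEq, ← hvtx i, h, ← hvtx j]
      · refine Or.inr ⟨((j : ℕ) : ZMod n), ?_⟩
        simp only [F, Subtype.mk.injEq, ← hvtx j, h, ← hvtx i, Sym2.eq_swap]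

/-- the line graph of the wheel -/
abbrev L (n : ℕ) : SimpleGraph (wheelGraph n).edgeSet := (wheelGraph n).lineGraph

lemma adj_EE {k l : ZMod n} (h : k ≠ l) : (L n).Adj (E k) (E l) := by
  rw [SimpleGraph.lineGraph_adj_iff_exists]
  exact ⟨fun hc => h (E_injective hc), ⟨none, by simp [E], by simp [E]⟩⟩

lemma adj_EF_iff {k l : ZMod n} : (L n).Adj (E k) (F l) ↔ (k = l ∨ k = l + 1) := by
  rw [SimpleGraph.lineGraph_adj_iff_exists]
  constructor
  · rintro ⟨-, v, hv1, hv2⟩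
    simp only [E, F, Sym2.mem_iff] at hv1 hv2
    rcases hv1 with rfl | rfl
    · rcases hv2 with h | h
      · exact absurd h.symm (vtx_ne_none l)
      · exact absurd h.symm (vtx_ne_none (l + 1))
    · rcases hv2 with h | h
      · exact Or.inl (vtx_injective h)
      · exact Or.inr (vtx_injective h)
  · intro h
    refine ⟨E_ne_F k l, ?_⟩
    rcases h with rfl | rfl
    · exact ⟨vtx k, by simp [E], by simp [F]⟩
    · exact ⟨vtx (l + 1), by simp [E], by simp [F]⟩

lemma adj_FF_iff {k l : ZMod n} : (L n).Adj (F k) (F l) ↔ (l = k + 1 ∨ k = l + 1) := by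
  rw [SimpleGraph.lineGraph_adj_iff_exists]
  constructor
  · rintro ⟨hne, v, hv1, hv2⟩
    have hkl : k ≠ l := fun hc => hne (congrArg F hc)
    simp only [F, Sym2.mem_iff] at hv1 hv2
    rcases hv1 with rfl | rfl
    · rcases hv2 with h | h
      · exact absurd (vtx_injective h) hkl
      · exact Or.inr (vtx_injective h)
    · rcases hv2 with h | h
      · exact Or.inl (vtx_injective h).symm
      · exact absurd (vtx_injective h) (by intro hc; exact hkl (by linear_combination hc))
  · intro h
    have hkl : k ≠ l := by
      rcases h with h | h
      · intro hc; exact one_ne_zero' (n := n) (by linear_combination - h - hc)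
      · intro hc; exact one_ne_zero' (n := n) (by linear_combination hc - h)
    refine ⟨fun hc => hkl (F_injective hc), ?_⟩
    rcases h with h | h
    · exact ⟨vtx (k + 1), by simp [F], by rw [h]; simp [F]⟩
    · exact ⟨vtx k, by simp [F], by rw [h]; simp [F]⟩

end WheelLG

namespace WheelLG

open SimpleGraph

variable {n : ℕ} [NeZero n] [Fact (6 ≤ n)]

lemma three_le_dist_aux {α : Type*} {G : SimpleGraph α} {u v : α} (hne : u ≠ v)
    (hnadj : ¬G.Adj u v) (hmid : ∀ w, G.Adj u w → G.Adj w v → False)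
    (p : G.Walk u v) : 3 ≤ G.dist u v := by
  have hr : G.Reachable u v := p.reachable
  have h0 : 0 < G.dist u v := hr.pos_dist_of_ne hne
  have h1 : G.dist u v ≠ 1 := fun hc => hnadj (SimpleGraph.dist_eq_one_iff_adj.mp hc)
  have h2 : G.dist u v ≠ 2 := by
    intro hc
    obtain ⟨q, hq⟩ := hr.exists_walk_length_eq_dist
    rw [hc] at hq
    cases q with
    | nil => simp at hq
    | cons h q' =>
      cases q' with
      | nil => simp at hq
      | cons h' q'' =>
        cases q'' with
        | nil => exact hmid _ h h'
        | cons h'' q''' => simp [SimpleGraph.Walk.length_cons] at hq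
  omega

lemma dEE {k l : ZMod n} (h : k ≠ l) : (L n).dist (E k) (E l) = 1 :=
  SimpleGraph.dist_eq_one_iff_adj.mpr (adj_EE h)

lemma dEF_one {k l : ZMod n} (h : k = l ∨ k = l + 1) : (L n).dist (E k) (F l) = 1 :=
  SimpleGraph.dist_eq_one_iff_adj.mpr (adj_EF_iff.mpr h)

lemma dEF_two {k l : ZMod n} (h1 : k ≠ l) (h2 : k ≠ l + 1) : (L n).dist (E k) (F l) = 2 := by
  let p : (L n).Walk (E k) (F l) :=
    SimpleGraph.Walk.cons (adj_EE h1) (SimpleGraph.Walk.cons (adj_EF_iff.mpr (Or.inl rfl))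
      SimpleGraph.Walk.nil)
  have hle : (L n).dist (E k) (F l) ≤ 2 := by
    have := SimpleGraph.dist_le p
    rwa [show p.length = 2 from rfl] at this
  have h0 : 0 < (L n).dist (E k) (F l) := p.reachable.pos_dist_of_ne (E_ne_F k l)
  have hne1 : (L n).dist (E k) (F l) ≠ 1 := by
    intro hc
    rcases adj_EF_iff.mp (SimpleGraph.dist_eq_one_iff_adj.mp hc) with h | h
    · exact h1 h
    · exact h2 h
  omega

lemma dFF_one {k l : ZMod n} (h : l = k + 1 ∨ k = l + 1) : (L n).dist (F k) (F l) = 1 :=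
  SimpleGraph.dist_eq_one_iff_adj.mpr (adj_FF_iff.mpr h)

lemma dFF_two' {k l : ZMod n} (h : l = k + 2) : (L n).dist (F k) (F l) = 2 := by
  have hne : F (n := n) k ≠ F l := by
    intro hc
    have := F_injective hc
    exact two_ne_zero' (n := n) (by linear_combination - h - this)
  let p : (L n).Walk (F k) (F l) :=
    SimpleGraph.Walk.cons (adj_FF_iff.mpr (Or.inl rfl))
      (SimpleGraph.Walk.cons (adj_FF_iff.mpr (Or.inl (by rw [h]; ring))) SimpleGraph.Walk.nil)
  have hle : (L n).dist (F k) (F l) ≤ 2 := by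
    have := SimpleGraph.dist_le p
    rwa [show p.length = 2 from rfl] at this
  have h0 : 0 < (L n).dist (F k) (F l) := p.reachable.pos_dist_of_ne hne
  have hne1 : (L n).dist (F k) (F l) ≠ 1 := by
    intro hc
    rcases adj_FF_iff.mp (SimpleGraph.dist_eq_one_iff_adj.mp hc) with h' | h'
    · exact one_ne_zero' (n := n) (by linear_combination h' - h)
    · exact three_ne_zero' (n := n) (by linear_combination - h - h')
  omega

lemma dFF_two {k l : ZMod n} (h : l = k + 2 ∨ k = l + 2) : (L n).dist (F k) (F l) = 2 := by
  rcases h with h | h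
  · exact dFF_two' h
  · rw [SimpleGraph.dist_comm]; exact dFF_two' h

lemma dFF_three {k l : ZMod n} (h0 : k ≠ l) (h1 : l ≠ k + 1) (h2 : k ≠ l + 1)
    (h3 : l ≠ k + 2) (h4 : k ≠ l + 2) : (L n).dist (F k) (F l) = 3 := by
  have hne : F (n := n) k ≠ F l := fun hc => h0 (F_injective hc)
  let p : (L n).Walk (F k) (F l) :=
    SimpleGraph.Walk.cons (adj_EF_iff.mpr (Or.inl rfl)).symm
      (SimpleGraph.Walk.cons (adj_EE h0)
        (SimpleGraph.Walk.cons (adj_EF_iff.mpr (Or.inl rfl)) SimpleGraph.Walk.nil))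
  have hle : (L n).dist (F k) (F l) ≤ 3 := by
    have := SimpleGraph.dist_le p
    rwa [show p.length = 3 from rfl] at this
  have hge : 3 ≤ (L n).dist (F k) (F l) := by
    refine three_le_dist_aux hne ?_ ?_ p
    · intro hc
      rcases adj_FF_iff.mp hc with h | h
      · exact h1 h
      · exact h2 h
    · intro w hw1 hw2
      rcases edge_cases w with ⟨m, rfl⟩ | ⟨m, rfl⟩
      · rcases adj_EF_iff.mp hw1.symm with hm1 | hm1 <;>
          rcases adj_EF_iff.mp hw2 with hm2 | hm2
        · exact h0 (by linear_combination hm2 - hm1)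
        · exact h2 (by linear_combination hm2 - hm1)
        · exact h1 (by linear_combination hm1 - hm2)
        · exact h0 (by linear_combination hm2 - hm1)
      · rcases adj_FF_iff.mp hw1 with hm1 | hm1 <;>
          rcases adj_FF_iff.mp hw2 with hm2 | hm2
        · exact h3 (by linear_combination hm2 + hm1)
        · exact h0 (by linear_combination hm2 - hm1)
        · exact h0 (by linear_combination hm1 - hm2)
        · exact h4 (by linear_combination hm1 + hm2)
  omega

lemma dEF_ne_zero (k l : ZMod n) : (L n).dist (E k) (F l) ≠ 0 := by
  by_cases h : k = l ∨ k = l + 1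
  · rw [dEF_one h]; omega
  · push_neg at h
    rw [dEF_two h.1 h.2]; omega

lemma dFF_ne_zero {k l : ZMod n} (h : k ≠ l) : (L n).dist (F k) (F l) ≠ 0 := by
  by_cases h1 : l = k + 1 ∨ k = l + 1
  · rw [dFF_one h1]; omega
  · by_cases h2 : l = k + 2 ∨ k = l + 2
    · rw [dFF_two h2]; omega
    · push_neg at h1 h2
      rw [dFF_three h h1.1 h1.2 h2.1 h2.2]; omega

end WheelLG

namespace WheelLG

open SimpleGraph

variable {n : ℕ} [NeZero n] [Fact (6 ≤ n)]

/-- `k` is a blank spoke index for the landmark set `W`. -/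
def Blank (W : Set (wheelGraph n).edgeSet) (k : ZMod n) : Prop :=
  E k ∉ W ∧ F (k - 1) ∉ W ∧ F k ∉ W

lemma blank_unique {W : Set (wheelGraph n).edgeSet} (hres : IsResolvingSet (L n) W)
    {k l : ZMod n} (hk : Blank W k) (hl : Blank W l) : k = l := by
  by_contra hne
  obtain ⟨w, hw, hd⟩ := hres (E k) (E l) (fun hc => hne (E_injective hc))
  rcases edge_cases w with ⟨m, rfl⟩ | ⟨m, rfl⟩
  · have hmk : k ≠ m := fun hc => hk.1 (hc ▸ hw)
    have hml : l ≠ m := fun hc => hl.1 (hc ▸ hw)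
    rw [SimpleGraph.dist_comm (u := E k), SimpleGraph.dist_comm (u := E l)] at hd
    exact hd (by rw [dEE (n := n) hmk.symm, dEE (n := n) hml.symm])
  · have h1 : k ≠ m := fun hc => hk.2.2 (hc ▸ hw)
    have h2 : k ≠ m + 1 := fun hc => hk.2.1 (by rw [show k - 1 = m by linear_combination hc]; exact hw)
    have h3 : l ≠ m := fun hc => hl.2.2 (hc ▸ hw)
    have h4 : l ≠ m + 1 := fun hc => hl.2.1 (by rw [show l - 1 = m by linear_combination hc]; exact hw)
    exact hd (by rw [dEF_two h1 h2, dEF_two h3 h4])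

lemma no_isolated {W : Set (wheelGraph n).edgeSet} (hres : IsResolvingSet (L n) W)
    (k : ZMod n) : ¬(F k ∈ W ∧ F (k - 1) ∉ W ∧ F (k + 1) ∉ W ∧ E k ∉ W ∧ E (k + 1) ∉ W) := by
  rintro ⟨h1, h2, h3, h4, h5⟩
  have hne : E (n := n) k ≠ E (k + 1) := by
    intro hc
    exact one_ne_zero' (n := n) (by linear_combination - (E_injective hc))
  obtain ⟨w, hw, hd⟩ := hres (E k) (E (k + 1)) hne
  rcases edge_cases w with ⟨m, rfl⟩ | ⟨m, rfl⟩
  · have hmk : k ≠ m := fun hc => h4 (hc ▸ hw)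
    have hml : k + 1 ≠ m := fun hc => h5 (hc ▸ hw)
    exact hd (by rw [dEE (n := n) hmk, dEE (n := n) hml])
  · by_cases hm : m = k
    · subst hm
      exact hd (by rw [dEF_one (Or.inl rfl), dEF_one (Or.inr rfl)])
    · have e1 : k ≠ m := fun hc => hm hc.symm
      have e2 : k ≠ m + 1 := fun hc => h2 (by rw [show k - 1 = m by linear_combination hc]; exact hw)
      have e3 : k + 1 ≠ m := fun hc => h3 (hc ▸ hw)
      have e4 : k + 1 ≠ m + 1 := fun hc => hm (by linear_combination - hc)
      exact hd (by rw [dEF_two e1 e2, dEF_two e3 e4])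

open scoped Classical in
/-- spoke indicator -/
noncomputable def aI (W : Set (wheelGraph n).edgeSet) (i : ZMod n) : ℕ :=
  if E i ∈ W then 1 else 0

open scoped Classical in
/-- cycle-edge indicator -/
noncomputable def bI (W : Set (wheelGraph n).edgeSet) (i : ZMod n) : ℕ :=
  if F i ∈ W then 1 else 0

/-- window weight -/
noncomputable def wI (W : Set (wheelGraph n).edgeSet) (i : ZMod n) : ℕ :=
  bI W i + bI W (i + 1) + bI W (i + 2) + aI W (i + 1) + aI W (i + 2)

lemma window_pos {W : Set (wheelGraph n).edgeSet} (hres : IsResolvingSet (L n) W)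
    (i : ZMod n) : 1 ≤ wI W i := by
  classical
  by_contra hc
  have h0 : wI W i = 0 := by omega
  unfold wI aI bI at h0
  have h1 : F i ∉ W := by by_contra h; simp [h] at h0
  have h2 : F (i + 1) ∉ W := by by_contra h; simp [h] at h0
  have h3 : F (i + 2) ∉ W := by by_contra h; simp [h] at h0
  have h4 : E (i + 1) ∉ W := by by_contra h; simp [h] at h0
  have h5 : E (i + 2) ∉ W := by by_contra h; simp [h] at h0
  have b1 : Blank W (i + 1) := ⟨h4, by rwa [show i + 1 - 1 = i by ring], h2⟩
  have b2 : Blank W (i + 2) := ⟨h5, by rwa [show i + 2 - 1 = i + 1 by ring], h3⟩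
  have := blank_unique hres b1 b2
  exact one_ne_zero' (n := n) (by linear_combination - this)

lemma window_two {W : Set (wheelGraph n).edgeSet} (hres : IsResolvingSet (L n) W)
    (i : ZMod n) : Blank W (i + 1) ∨ Blank W (i + 2) ∨ 2 ≤ wI W i := by
  classical
  by_cases hb1 : Blank W (i + 1)
  · exact Or.inl hb1
  by_cases hb2 : Blank W (i + 2)
  · exact Or.inr (Or.inl hb2)
  refine Or.inr (Or.inr ?_)
  unfold Blank at hb1 hb2
  rw [show i + 1 - 1 = i by ring] at hb1
  rw [show i + 2 - 1 = i + 1 by ring] at hb2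
  simp only [not_and_or, not_not] at hb1 hb2
  -- helper equalities
  have key : ∀ (P Q : Prop) [Decidable P] [Decidable Q], P → Q →
      (¬(P ↔ Q)) → 2 ≤ (if P then 1 else 0) + (if Q then 1 else 0) := by
    intro P Q _ _ hp hq _
    rw [if_pos hp, if_pos hq]
  unfold wI aI bI
  rcases hb1 with h | h | h <;> rcases hb2 with h' | h' | h'
  · -- E (i+1), E (i+2)
    rw [if_pos h, if_pos h']; omega
  · rw [if_pos h, if_pos h']; omega
  · rw [if_pos h, if_pos h']; omega
  · rw [if_pos h, if_pos h']; omega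
  · -- F i, F (i+1)
    rw [if_pos h, if_pos h']; omega
  · rw [if_pos h, if_pos h']; omega
  · rw [if_pos h, if_pos h']; omega
  · -- F (i+1), F (i+1): the subtle case
    by_cases p1 : E (i + 1) ∈ W
    · rw [if_pos h, if_pos p1]; omega
    · by_cases p2 : E (i + 2) ∈ W
      · rw [if_pos h, if_pos p2]; omega
      · by_cases p3 : F i ∈ W
        · rw [if_pos h, if_pos p3]; omega
        · by_cases p4 : F (i + 2) ∈ W
          · rw [if_pos h, if_pos p4]; omega
          · exfalso
            refine no_isolated hres (i + 1) ⟨h, ?_, ?_, p1, ?_⟩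
            · rwa [show i + 1 - 1 = i by ring]
            · rwa [show i + 1 + 1 = i + 2 by ring]
            · rwa [show i + 1 + 1 = i + 2 by ring]
  · rw [if_pos h, if_pos h']; omega

end WheelLG

namespace WheelLG

open SimpleGraph Finset

variable {n : ℕ} [NeZero n] [Fact (6 ≤ n)]

open scoped Classical in
lemma sum_indicator_eq_ncard (S : Set (ZMod n)) :
    ∑ i : ZMod n, (if i ∈ S then 1 else 0) = S.ncard := by
  rw [Set.ncard_eq_toFinset_card', ← Finset.card_filter]
  congr 1
  ext i
  simp

lemma ncard_W (W : Set (wheelGraph n).edgeSet) :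
    W.ncard = (∑ i : ZMod n, aI W i) + (∑ i : ZMod n, bI W i) := by
  classical
  have hdecomp : W = (E '' {k : ZMod n | E k ∈ W}) ∪ (F '' {k : ZMod n | F k ∈ W}) := by
    ext w
    constructor
    · intro hw
      rcases edge_cases w with ⟨m, rfl⟩ | ⟨m, rfl⟩
      · exact Or.inl ⟨m, hw, rfl⟩
      · exact Or.inr ⟨m, hw, rfl⟩
    · rintro (⟨m, hm, rfl⟩ | ⟨m, hm, rfl⟩) <;> exact hm
  have hdisj : Disjoint (E '' {k : ZMod n | E k ∈ W}) (F '' {k : ZMod n | F k ∈ W}) := by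
    rw [Set.disjoint_left]
    rintro x ⟨m, -, rfl⟩ ⟨m', -, he⟩
    exact E_ne_F m m' he.symm
  have h1 : W.ncard = ({k : ZMod n | E k ∈ W}).ncard + ({k : ZMod n | F k ∈ W}).ncard := by
    conv_lhs => rw [hdecomp]
    rw [Set.ncard_union_eq hdisj (Set.toFinite _) (Set.toFinite _),
      Set.ncard_image_of_injective _ E_injective, Set.ncard_image_of_injective _ F_injective]
  rw [h1, ← sum_indicator_eq_ncard, ← sum_indicator_eq_ncard]
  have e1 : ∀ i : ZMod n, (if i ∈ {k : ZMod n | E k ∈ W} then 1 else 0) = aI W i := by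
    intro i; simp [aI, Set.mem_setOf_eq]
  have e2 : ∀ i : ZMod n, (if i ∈ {k : ZMod n | F k ∈ W} then 1 else 0) = bI W i := by
    intro i; simp [bI, Set.mem_setOf_eq]
  rw [Finset.sum_congr rfl (fun i _ => e1 i), Finset.sum_congr rfl (fun i _ => e2 i)]

lemma sum_shift (f : ZMod n → ℕ) (c : ZMod n) : ∑ i : ZMod n, f (i + c) = ∑ i : ZMod n, f i :=
  Fintype.sum_equiv (Equiv.addRight c) _ _ (fun _ => rfl)

lemma sum_wI (W : Set (wheelGraph n).edgeSet) :
    ∑ i : ZMod n, wI W i = 3 * (∑ i : ZMod n, bI W i) + 2 * (∑ i : ZMod n, aI W i) := by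
  unfold wI
  rw [Finset.sum_add_distrib, Finset.sum_add_distrib, Finset.sum_add_distrib,
    Finset.sum_add_distrib]
  rw [sum_shift (bI W) 1, sum_shift (bI W) 2, sum_shift (aI W) 1, sum_shift (aI W) 2]
  ring

lemma lower_bound {W : Set (wheelGraph n).edgeSet} (hres : IsResolvingSet (L n) W) :
    n - (n + 2) / 3 ≤ W.ncard := by
  classical
  have hcard : Fintype.card (ZMod n) = n := ZMod.card n
  have hkey : 2 * n ≤ (∑ i : ZMod n, wI W i) + 2 := by
    by_cases hbl : ∃ k0, Blank W k0
    · obtain ⟨k0, hk0⟩ := hbl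
      have hp : ∀ i : ZMod n,
          2 ≤ wI W i + ((if i = k0 - 1 then 1 else 0) + (if i = k0 - 2 then 1 else 0)) := by
        intro i
        rcases window_two hres i with hb | hb | h2
        · have h1 : i + 1 = k0 := blank_unique hres hb hk0
          have h2 : i = k0 - 1 := by linear_combination h1
          rw [if_pos h2]
          have := window_pos hres i
          omega
        · have h1 : i + 2 = k0 := blank_unique hres hb hk0
          have h2 : i = k0 - 2 := by linear_combination h1
          rw [if_pos h2]
          have := window_pos hres i
          omega
        · omega
      have hsum := Finset.sum_le_sum (fun i (_ : i ∈ Finset.univ) => hp i)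
      rw [Finset.sum_const, Finset.card_univ, hcard, smul_eq_mul] at hsum
      rw [Finset.sum_add_distrib, Finset.sum_add_distrib] at hsum
      rw [Finset.sum_ite_eq' Finset.univ (k0 - 1) (fun _ => 1),
        Finset.sum_ite_eq' Finset.univ (k0 - 2) (fun _ => 1)] at hsum
      simp only [Finset.mem_univ, if_true] at hsum
      omega
    · push_neg at hbl
      have hp : ∀ i : ZMod n, 2 ≤ wI W i := by
        intro i
        rcases window_two hres i with hb | hb | h2
        · exact absurd hb (hbl _)
        · exact absurd hb (hbl _)
        · exact h2
      have hsum := Finset.sum_le_sum (fun i (_ : i ∈ Finset.univ) => hp i)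
      rw [Finset.sum_const, Finset.card_univ, hcard, smul_eq_mul] at hsum
      omega
  rw [sum_wI] at hkey
  have hW := ncard_W W
  have h6 : 6 ≤ n := hn6
  omega

end WheelLG

namespace WheelLG

open SimpleGraph

variable {n : ℕ} [NeZero n] [Fact (6 ≤ n)]

/-- the landmark index predicate -/
def P0 (n i : ℕ) : Prop := (i % 3 ≠ 0 ∧ i < 3 * (n / 3)) ∨ (n % 3 = 2 ∧ i = 0)

/-- the landmark index set -/
def B0 (n : ℕ) [NeZero n] : Set (ZMod n) := {k | P0 n k.val}

lemma cast_mem_B0_iff {j : ℕ} (hj : j < n) : ((j : ZMod n) ∈ B0 n) ↔ P0 n j := by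
  rw [B0, Set.mem_setOf_eq, ZMod.val_natCast, Nat.mod_eq_of_lt hj]

lemma val_mem_B0_iff (k : ZMod n) : k ∈ B0 n ↔ P0 n k.val := Iff.rfl

lemma cast_sub_one (u : ℕ) (h1 : 1 ≤ u) : ((u : ZMod n)) - 1 = (((u - 1 : ℕ)) : ZMod n) := by
  rw [Nat.cast_sub h1]; norm_num

lemma noiso {k : ZMod n} (hk : k ∈ B0 n) : k - 1 ∈ B0 n ∨ k + 1 ∈ B0 n := by
  have h6 : 6 ≤ n := hn6
  set u := k.val with hu
  have hul : u < n := k.val_lt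
  have hkc : k = (u : ZMod n) := (ZMod.natCast_zmod_val k).symm
  have hP : P0 n u := hk
  rcases hP with ⟨h1, h2⟩ | ⟨h1, h2⟩
  · have hu3 : u % 3 = 0 ∨ u % 3 = 1 ∨ u % 3 = 2 := by omega
    rcases hu3 with h3 | h3 | h3
    · exact absurd h3 h1
    · -- u % 3 = 1, go right
      right
      have he : k + 1 = ((u + 1 : ℕ) : ZMod n) := by rw [hkc]; push_cast; ring
      rw [he, cast_mem_B0_iff (by omega)]
      exact Or.inl (by omega)
    · -- u % 3 = 2, go left
      left
      have he : k - 1 = ((u - 1 : ℕ) : ZMod n) := by rw [hkc]; exact cast_sub_one u (by omega)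
      rw [he, cast_mem_B0_iff (by omega)]
      exact Or.inl (by omega)
  · -- n % 3 = 2 and u = 0
    right
    have he : k + 1 = ((1 : ℕ) : ZMod n) := by rw [hkc, h2]; push_cast; ring
    rw [he, cast_mem_B0_iff (by omega)]
    exact Or.inl (by omega)

lemma no3gap (k : ZMod n) : k ∈ B0 n ∨ k + 1 ∈ B0 n ∨ k + 2 ∈ B0 n := by
  have h6 : 6 ≤ n := hn6
  by_contra hc
  push_neg at hc
  obtain ⟨hc0, hc1, hc2⟩ := hc
  set u := k.val with hu
  have hul : u < n := k.val_lt
  have hkc : k = (u : ZMod n) := (ZMod.natCast_zmod_val k).symm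
  have np0 : ¬ P0 n u := hc0
  rcases Nat.lt_or_ge u (n - 2) with h | h
  · have he1 : k + 1 = ((u + 1 : ℕ) : ZMod n) := by rw [hkc]; push_cast; ring
    have he2 : k + 2 = ((u + 2 : ℕ) : ZMod n) := by rw [hkc]; push_cast; ring
    rw [he1, cast_mem_B0_iff (by omega)] at hc1
    rw [he2, cast_mem_B0_iff (by omega)] at hc2
    unfold P0 at np0 hc1 hc2
    omega
  · rcases Nat.lt_or_ge u (n - 1) with h' | h'
    · -- u = n - 2
      have hu2 : u = n - 2 := by omega
      have he1 : k + 1 = (((n - 1 : ℕ)) : ZMod n) := by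
        rw [hkc, hu2]; push_cast [Nat.cast_sub (by omega : 2 ≤ n), Nat.cast_sub (by omega : 1 ≤ n)]
        rw [ZMod.natCast_self]; ring
      have he2 : k + 2 = (((0 : ℕ)) : ZMod n) := by
        rw [hkc, hu2]; push_cast [Nat.cast_sub (by omega : 2 ≤ n)]
        rw [ZMod.natCast_self]; ring
      rw [he1, cast_mem_B0_iff (by omega)] at hc1
      rw [he2, cast_mem_B0_iff (by omega)] at hc2
      rw [hu2] at np0
      unfold P0 at np0 hc1 hc2
      omega
    · -- u = n - 1
      have hu2 : u = n - 1 := by omega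
      have he1 : k + 1 = (((0 : ℕ)) : ZMod n) := by
        rw [hkc, hu2]; push_cast [Nat.cast_sub (by omega : 1 ≤ n)]
        rw [ZMod.natCast_self]; ring
      have he2 : k + 2 = (((1 : ℕ)) : ZMod n) := by
        rw [hkc, hu2]; push_cast [Nat.cast_sub (by omega : 1 ≤ n)]
        rw [ZMod.natCast_self]; ring
      rw [he1, cast_mem_B0_iff (by omega)] at hc1
      rw [he2, cast_mem_B0_iff (by omega)] at hc2
      rw [hu2] at np0
      unfold P0 at np0 hc1 hc2
      omega

lemma gap2 {k : ZMod n} (h0 : k ∉ B0 n) (h1 : k + 1 ∉ B0 n) :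
    (n % 3 = 1 ∧ k = (((n - 1 : ℕ)) : ZMod n)) ∨ (n % 3 = 2 ∧ k = (((n - 2 : ℕ)) : ZMod n)) := by
  have h6 : 6 ≤ n := hn6
  set u := k.val with hu
  have hul : u < n := k.val_lt
  have hkc : k = (u : ZMod n) := (ZMod.natCast_zmod_val k).symm
  have np0 : ¬ P0 n u := h0
  rcases Nat.lt_or_ge u (n - 1) with h | h
  · have he1 : k + 1 = ((u + 1 : ℕ) : ZMod n) := by rw [hkc]; push_cast; ring
    rw [he1, cast_mem_B0_iff (by omega)] at h1
    right
    have : n % 3 = 2 ∧ u = n - 2 := by unfold P0 at np0 h1; omega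
    exact ⟨this.1, by rw [hkc, this.2]⟩
  · -- u = n - 1
    have hu2 : u = n - 1 := by omega
    have he1 : k + 1 = (((0 : ℕ)) : ZMod n) := by
      rw [hkc, hu2]; push_cast [Nat.cast_sub (by omega : 1 ≤ n)]
      rw [ZMod.natCast_self]; ring
    rw [he1, cast_mem_B0_iff (by omega)] at h1
    left
    have : n % 3 = 1 := by rw [hu2] at np0; unfold P0 at np0 h1; omega
    exact ⟨this, by rw [hkc, hu2]⟩

end WheelLG

namespace WheelLG

open SimpleGraph

variable {n : ℕ} [NeZero n] [Fact (6 ≤ n)]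

lemma cne {a b : ℕ} (ha : a < n) (hb : b < n) (h : a ≠ b) : (a : ZMod n) ≠ (b : ZMod n) :=
  fun hc => h (natCast_zmod_inj ha hb hc)

lemma dFF_ge_two {k l : ZMod n} (hne : k ≠ l) (h1 : l ≠ k + 1) (h2 : k ≠ l + 1) :
    2 ≤ (L n).dist (F k) (F l) := by
  by_cases h : l = k + 2 ∨ k = l + 2
  · rw [dFF_two h]
  · push_neg at h
    rw [dFF_three hne h1 h2 h.1 h.2]
    omega

lemma EE_resolve {x y k : ZMod n} (hk : k ∈ B0 n) (h1 : x = k ∨ x = k + 1)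
    (h2 : y ≠ k) (h3 : y ≠ k + 1) :
    ∃ k ∈ B0 n, (L n).dist (E x) (F k) ≠ (L n).dist (E y) (F k) :=
  ⟨k, hk, by rw [dEF_one h1, dEF_two h2 h3]; omega⟩

lemma EE_chase {x y : ZMod n} (hxy : x ≠ y) :
    ∃ k ∈ B0 n, (L n).dist (E x) (F k) ≠ (L n).dist (E y) (F k) := by
  have swap : (∃ k ∈ B0 n, (L n).dist (E y) (F k) ≠ (L n).dist (E x) (F k)) →
      ∃ k ∈ B0 n, (L n).dist (E x) (F k) ≠ (L n).dist (E y) (F k) :=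
    fun ⟨k, hk, hne⟩ => ⟨k, hk, hne.symm⟩
  by_cases c1 : x - 1 ∈ B0 n
  · by_cases d1 : y = x - 1
    · by_cases c2 : x ∈ B0 n
      · refine EE_resolve c2 (Or.inl rfl) hxy.symm ?_
        rw [d1]; intro hc
        exact two_ne_zero' (n := n) (by linear_combination - hc)
      · by_cases c3 : x - 2 ∈ B0 n
        · refine swap (EE_resolve c3 (Or.inr (by rw [d1]; ring)) ?_ ?_)
          · intro hc; exact two_ne_zero' (n := n) (by linear_combination hc)
          · rw [show x - 2 + 1 = x - 1 by ring]
            intro hc; exact one_ne_zero' (n := n) (by linear_combination hc)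
        · exfalso
          rcases noiso c1 with h | h
          · rw [show x - 1 - 1 = x - 2 by ring] at h; exact c3 h
          · rw [show x - 1 + 1 = x by ring] at h; exact c2 h
    · refine EE_resolve c1 (Or.inr (by ring)) d1 ?_
      rw [show x - 1 + 1 = x by ring]; exact hxy.symm
  · by_cases c2 : x ∈ B0 n
    · by_cases d2 : x = y - 1
      · by_cases c3 : y ∈ B0 n
        · refine swap (EE_resolve c3 (Or.inl rfl) hxy ?_)
          intro hc
          exact two_ne_zero' (n := n) (by linear_combination d2 - hc)
        · exfalso
          rcases noiso c2 with h | h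
          · exact c1 h
          · rw [show x + 1 = y by linear_combination d2] at h; exact c3 h
      · refine EE_resolve c2 (Or.inl rfl) hxy.symm ?_
        intro hc; exact d2 (by linear_combination - hc)
    · by_cases c3 : y - 1 ∈ B0 n
      · refine swap (EE_resolve c3 (Or.inr (by ring)) ?_ ?_)
        · intro hc; rw [← hc] at c3; exact c2 c3
        · rw [show y - 1 + 1 = y by ring]; exact hxy
      · by_cases c4 : y ∈ B0 n
        · refine swap (EE_resolve c4 (Or.inl rfl) hxy ?_)
          intro hc
          rw [show y = x - 1 by linear_combination - hc] at c4
          exact c1 c4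
        · exfalso
          have hx' : x - 1 + 1 ∉ B0 n := by rwa [show x - 1 + 1 = x by ring]
          have hy' : y - 1 + 1 ∉ B0 n := by rwa [show y - 1 + 1 = y by ring]
          rcases gap2 c1 hx' with ⟨e1, e2⟩ | ⟨e1, e2⟩ <;>
            rcases gap2 c3 hy' with ⟨f1, f2⟩ | ⟨f1, f2⟩
          · exact hxy (by linear_combination e2 - f2)
          · omega
          · omega
          · exact hxy (by linear_combination e2 - f2)

end WheelLG

namespace WheelLG

open SimpleGraph

variable {n : ℕ} [NeZero n] [Fact (6 ≤ n)]

lemma FF_resolve {x y k : ZMod n} (hk : k ∈ B0 n) (h1 : x = k + 1 ∨ k = x + 1)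
    (h2 : y ≠ k) (h3 : y ≠ k + 1) (h4 : k ≠ y + 1) :
    ∃ k ∈ B0 n, (L n).dist (F x) (F k) ≠ (L n).dist (F y) (F k) := by
  refine ⟨k, hk, ?_⟩
  have ha := dFF_one (n := n) (k := x) (l := k) h1.symm
  have hb := dFF_ge_two (n := n) (k := y) (l := k) h2 h4 h3
  omega

lemma FF_chase {x y : ZMod n} (hxy : x ≠ y) (hx : x ∉ B0 n) (hy : y ∉ B0 n) :
    ∃ k ∈ B0 n, (L n).dist (F x) (F k) ≠ (L n).dist (F y) (F k) := by
  by_cases c1 : x - 1 ∈ B0 n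
  · by_cases d1 : x - 1 = y + 1
    · by_cases c2 : x + 1 ∈ B0 n
      · refine FF_resolve c2 (Or.inr rfl) ?_ ?_ ?_
        · intro hc; exact three_ne_zero' (n := n) (by linear_combination - hc - d1)
        · intro hc
          exact four_ne_zero' (n := n) (by linear_combination - hc - d1)
        · intro hc; exact hxy (by linear_combination hc)
      · exfalso
        rcases noiso c1 with h | h
        · rw [show x - 1 - 1 = y by linear_combination d1] at h; exact hy h
        · rw [show x - 1 + 1 = x by ring] at h; exact hx h
    · refine FF_resolve c1 (Or.inl (by ring)) ?_ ?_ d1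
      · intro hc; rw [← hc] at c1; exact hy c1
      · rw [show x - 1 + 1 = x by ring]; exact hxy.symm
  · by_cases c2 : x + 1 ∈ B0 n
    · by_cases d2 : x + 1 = y - 1
      · exfalso
        rcases noiso c2 with h | h
        · rw [show x + 1 - 1 = x by ring] at h; exact hx h
        · rw [show x + 1 + 1 = y by linear_combination d2] at h; exact hy h
      · refine FF_resolve c2 (Or.inr rfl) ?_ ?_ ?_
        · intro hc; rw [← hc] at c2; exact hy c2
        · intro hc; exact d2 (by linear_combination - hc)
        · intro hc; exact hxy (by linear_combination hc)
    · exfalso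
      rcases no3gap (x - 1) with h | h | h
      · exact c1 h
      · rw [show x - 1 + 1 = x by ring] at h; exact hx h
      · rw [show x - 1 + 2 = x + 1 by ring] at h; exact c2 h

lemma EF_resolve_y {x y k : ZMod n} (hk : k ∈ B0 n) (h1 : k = y + 1 ∨ y = k + 1)
    (h2 : x ≠ k) (h3 : x ≠ k + 1) :
    ∃ k ∈ B0 n, (L n).dist (E x) (F k) ≠ (L n).dist (F y) (F k) := by
  refine ⟨k, hk, ?_⟩
  rw [dEF_two h2 h3, dFF_one (n := n) (k := y) (l := k) h1]
  omega

lemma EF_far {x y k : ZMod n} (hk : k ∈ B0 n) (hx1 : x ≠ k) (hx2 : x ≠ k + 1)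
    (h0 : y ≠ k) (h1 : k ≠ y + 1) (h2 : y ≠ k + 1) (h3 : k ≠ y + 2) (h4 : y ≠ k + 2) :
    ∃ k ∈ B0 n, (L n).dist (E x) (F k) ≠ (L n).dist (F y) (F k) := by
  refine ⟨k, hk, ?_⟩
  rw [dEF_two hx1 hx2, dFF_three (n := n) (k := y) (l := k) h0 h1 h2 h3 h4]
  omega

end WheelLG

namespace WheelLG

open SimpleGraph

variable {n : ℕ} [NeZero n] [Fact (6 ≤ n)]

lemma cast01 : ((0:ℕ):ZMod n) + 1 = ((1:ℕ):ZMod n) := by push_cast; ring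
lemma cast21 : ((2:ℕ):ZMod n) + 1 = ((3:ℕ):ZMod n) := by push_cast; ring
lemma cast22 : ((2:ℕ):ZMod n) + 2 = ((4:ℕ):ZMod n) := by push_cast; ring
lemma cast41 : ((4:ℕ):ZMod n) + 1 = ((5:ℕ):ZMod n) := by push_cast; ring
lemma cast42 : ((4:ℕ):ZMod n) + 2 = ((6:ℕ):ZMod n) := by push_cast; ring

lemma en1a1 : ((n-1:ℕ):ZMod n) + 1 = ((0:ℕ):ZMod n) := by
  have h6 : 6 ≤ n := hn6
  push_cast [Nat.cast_sub (show 1 ≤ n by omega)]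
  rw [ZMod.natCast_self]; ring

lemma en1a2 : ((n-1:ℕ):ZMod n) + 2 = ((1:ℕ):ZMod n) := by
  have h6 : 6 ≤ n := hn6
  push_cast [Nat.cast_sub (show 1 ≤ n by omega)]
  rw [ZMod.natCast_self]; ring

lemma en2a1 : ((n-2:ℕ):ZMod n) + 1 = ((n-1:ℕ):ZMod n) := by
  have h6 : 6 ≤ n := hn6
  push_cast [Nat.cast_sub (show 1 ≤ n by omega), Nat.cast_sub (show 2 ≤ n by omega)]
  ring

lemma en2a2 : ((n-2:ℕ):ZMod n) + 2 = ((0:ℕ):ZMod n) := by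
  have h6 : 6 ≤ n := hn6
  push_cast [Nat.cast_sub (show 2 ≤ n by omega)]
  rw [ZMod.natCast_self]; ring

lemma EF_chase {x y : ZMod n} (hy : y ∉ B0 n) :
    ∃ k ∈ B0 n, (L n).dist (E x) (F k) ≠ (L n).dist (F y) (F k) := by
  have h6 : 6 ≤ n := hn6
  by_cases c1 : y + 1 ∈ B0 n
  · by_cases d1 : x = y + 2
    · by_cases c2 : y - 1 ∈ B0 n
      · refine EF_resolve_y c2 (Or.inr (by ring)) ?_ ?_
        · intro hc; exact three_ne_zero' (n := n) (by linear_combination hc - d1)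
        · rw [show y - 1 + 1 = y by ring]
          intro hc; exact two_ne_zero' (n := n) (by linear_combination hc - d1)
      · have c3 : y + 2 ∈ B0 n := by
          rcases noiso c1 with h | h
          · rw [show y + 1 - 1 = y by ring] at h; exact absurd h hy
          · rwa [show y + 1 + 1 = y + 2 by ring] at h
        refine ⟨y + 2, c3, ?_⟩
        rw [dEF_one (Or.inl d1), dFF_two (n := n) (k := y) (l := y + 2) (Or.inl rfl)]
        omega
    · by_cases d2 : x = y + 1
      · by_cases c2 : y - 1 ∈ B0 n
        · refine EF_resolve_y c2 (Or.inr (by ring)) ?_ ?_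
          · intro hc; exact two_ne_zero' (n := n) (by linear_combination hc - d2)
          · rw [show y - 1 + 1 = y by ring]
            intro hc; exact one_ne_zero' (n := n) (by linear_combination hc - d2)
        · -- seam; gap at (y-1, y)
          have hy1 : y - 1 + 1 ∉ B0 n := by rwa [show y - 1 + 1 = y by ring]
          rcases gap2 c2 hy1 with ⟨hr, e⟩ | ⟨hr, e⟩
          · -- n % 3 = 1 : y = 0, x = 1, landmark 4
            have h7 : 7 ≤ n := by omega
            have hyv : y = ((0:ℕ):ZMod n) := by rw [← en1a1]; linear_combination e
            have hxv : x = ((1:ℕ):ZMod n) := by rw [d2, hyv, cast01]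
            refine EF_far (k := ((4:ℕ):ZMod n)) ?_ ?_ ?_ ?_ ?_ ?_ ?_ ?_
            · rw [cast_mem_B0_iff (by omega)]; exact Or.inl (by omega)
            · rw [hxv]; exact cne (by omega) (by omega) (by omega)
            · rw [hxv, cast41]; exact cne (by omega) (by omega) (by omega)
            · rw [hyv]; exact cne (by omega) (by omega) (by omega)
            · rw [hyv, cast01]; exact cne (by omega) (by omega) (by omega)
            · rw [hyv, cast41]; exact cne (by omega) (by omega) (by omega)
            · rw [hyv, show ((0:ℕ):ZMod n) + 2 = ((2:ℕ):ZMod n) by push_cast; ring]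
              exact cne (by omega) (by omega) (by omega)
            · rw [hyv, cast42]; exact cne (by omega) (by omega) (by omega)
          · -- n % 3 = 2 : y = n-1, x = 0, landmark 2
            have h8 : 8 ≤ n := by omega
            have hyv : y = ((n-1:ℕ):ZMod n) := by rw [← en2a1]; linear_combination e
            have hxv : x = ((0:ℕ):ZMod n) := by rw [d2, hyv, en1a1]
            refine EF_far (k := ((2:ℕ):ZMod n)) ?_ ?_ ?_ ?_ ?_ ?_ ?_ ?_
            · rw [cast_mem_B0_iff (by omega)]; exact Or.inl (by omega)
            · rw [hxv]; exact cne (by omega) (by omega) (by omega)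
            · rw [hxv, cast21]; exact cne (by omega) (by omega) (by omega)
            · rw [hyv]; exact cne (by omega) (by omega) (by omega)
            · rw [hyv, en1a1]; exact cne (by omega) (by omega) (by omega)
            · rw [hyv, cast21]; exact cne (by omega) (by omega) (by omega)
            · rw [hyv, en1a2]; exact cne (by omega) (by omega) (by omega)
            · rw [hyv, cast22]; exact cne (by omega) (by omega) (by omega)
      · -- x not near y on the + side: use k = y + 1
        refine EF_resolve_y c1 (Or.inl rfl) d2 ?_
        rw [show y + 1 + 1 = y + 2 by ring]; exact d1
  · -- y + 1 not a landmark, so y - 1 is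
    have c3 : y - 1 ∈ B0 n := by
      rcases no3gap (y - 1) with h | h | h
      · exact h
      · rw [show y - 1 + 1 = y by ring] at h; exact absurd h hy
      · rw [show y - 1 + 2 = y + 1 by ring] at h; exact absurd h c1
    by_cases d1 : x = y - 1
    · have c4 : y - 2 ∈ B0 n := by
        rcases noiso c3 with h | h
        · rwa [show y - 1 - 1 = y - 2 by ring] at h
        · rw [show y - 1 + 1 = y by ring] at h; exact absurd h hy
      refine ⟨y - 2, c4, ?_⟩
      rw [dEF_one (Or.inr (by rw [d1]; ring)),
        dFF_two (n := n) (k := y) (l := y - 2) (Or.inr (by ring))]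
      omega
    · by_cases d2 : x = y
      · -- seam; gap at (y, y+1)
        rcases gap2 hy c1 with ⟨hr, e⟩ | ⟨hr, e⟩
        · -- n % 3 = 1 : x = y = n-1, landmark 2
          have h7 : 7 ≤ n := by omega
          refine EF_far (k := ((2:ℕ):ZMod n)) ?_ ?_ ?_ ?_ ?_ ?_ ?_ ?_
          · rw [cast_mem_B0_iff (by omega)]; exact Or.inl (by omega)
          · rw [d2, e]; exact cne (by omega) (by omega) (by omega)
          · rw [d2, e, cast21]; exact cne (by omega) (by omega) (by omega)
          · rw [e]; exact cne (by omega) (by omega) (by omega)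
          · rw [e, en1a1]; exact cne (by omega) (by omega) (by omega)
          · rw [e, cast21]; exact cne (by omega) (by omega) (by omega)
          · rw [e, en1a2]; exact cne (by omega) (by omega) (by omega)
          · rw [e, cast22]; exact cne (by omega) (by omega) (by omega)
        · -- n % 3 = 2 : x = y = n-2, landmark 2
          have h8 : 8 ≤ n := by omega
          refine EF_far (k := ((2:ℕ):ZMod n)) ?_ ?_ ?_ ?_ ?_ ?_ ?_ ?_
          · rw [cast_mem_B0_iff (by omega)]; exact Or.inl (by omega)
          · rw [d2, e]; exact cne (by omega) (by omega) (by omega)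
          · rw [d2, e, cast21]; exact cne (by omega) (by omega) (by omega)
          · rw [e]; exact cne (by omega) (by omega) (by omega)
          · rw [e, en2a1]; exact cne (by omega) (by omega) (by omega)
          · rw [e, cast21]; exact cne (by omega) (by omega) (by omega)
          · rw [e, en2a2]; exact cne (by omega) (by omega) (by omega)
          · rw [e, cast22]; exact cne (by omega) (by omega) (by omega)
      · refine EF_resolve_y c3 (Or.inr (by ring)) d1 ?_
        rw [show y - 1 + 1 = y by ring]; exact d2

end WheelLG

namespace WheelLG

open SimpleGraph

variable {n : ℕ} [NeZero n] [Fact (6 ≤ n)]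

lemma B0_ncard : (B0 n).ncard = n - (n + 2) / 3 := by
  classical
  have h6 : 6 ≤ n := hn6
  have h1 : (B0 n).ncard = ((Finset.range n).filter (fun j => P0 n j)).card := by
    rw [Set.ncard_eq_toFinset_card']
    refine Finset.card_bij (fun k _ => k.val) ?_ ?_ ?_
    · intro k hk
      rw [Set.mem_toFinset] at hk
      simp only [Finset.mem_filter, Finset.mem_range]
      exact ⟨k.val_lt, hk⟩
    · intro a _ b _ h
      exact ZMod.val_injective n h
    · intro j hj
      simp only [Finset.mem_filter, Finset.mem_range] at hj
      refine ⟨(j : ZMod n), ?_, ZMod.val_cast_of_lt hj.1⟩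
      rw [Set.mem_toFinset, cast_mem_B0_iff hj.1]
      exact hj.2
  rw [h1]
  set m := n / 3 with hm
  have key : (Finset.range n).filter (fun j => P0 n j) =
      ((Finset.range (3*m)).filter (fun j => ¬ (j % 3 = 0))) ∪
        (if n % 3 = 2 then ({0} : Finset ℕ) else ∅) := by
    by_cases hr : n % 3 = 2
    · rw [if_pos hr]
      ext j
      simp only [Finset.mem_filter, Finset.mem_range, Finset.mem_union, Finset.mem_singleton]
      unfold P0
      omega
    · rw [if_neg hr]
      ext j
      simp only [Finset.mem_filter, Finset.mem_range, Finset.mem_union,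
        Finset.notMem_empty, or_false]
      unfold P0
      omega
  rw [key]
  have hdis : Disjoint ((Finset.range (3*m)).filter (fun j => ¬ (j % 3 = 0)))
      (if n % 3 = 2 then ({0} : Finset ℕ) else ∅) := by
    rw [Finset.disjoint_left]
    intro j hj hj'
    simp only [Finset.mem_filter, Finset.mem_range] at hj
    by_cases hr : n % 3 = 2
    · rw [if_pos hr] at hj'
      simp only [Finset.mem_singleton] at hj'
      omega
    · rw [if_neg hr] at hj'
      exact absurd hj' (Finset.notMem_empty j)
  rw [Finset.card_union_of_disjoint hdis]
  have himg : (Finset.range m).image (fun t => 3*t) =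
      (Finset.range (3*m)).filter (fun j => j % 3 = 0) := by
    ext j
    simp only [Finset.mem_image, Finset.mem_filter, Finset.mem_range]
    constructor
    · rintro ⟨t, ht, rfl⟩
      show 3 * t < 3 * m ∧ 3 * t % 3 = 0
      omega
    · intro h; exact ⟨j / 3, by omega, by omega⟩
  have hinj : Function.Injective (fun t : ℕ => 3*t) := fun a b h => by
    have h2 : 3*a = 3*b := h
    omega
  have hcnt := Finset.card_filter_add_card_filter_not
    (s := Finset.range (3*m)) (p := fun j => j % 3 = 0)
  rw [← himg, Finset.card_image_of_injective _ hinj, Finset.card_range] at hcnt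
  have hif : (if n % 3 = 2 then ({0} : Finset ℕ) else ∅).card = if n % 3 = 2 then 1 else 0 := by
    by_cases hr : n % 3 = 2 <;> simp [hr]
  rw [Finset.card_range] at hcnt
  rw [hif]
  by_cases hr : n % 3 = 2
  · rw [if_pos hr]; omega
  · rw [if_neg hr]; omega

lemma resolving_B0 : IsResolvingSet (L n) (F '' B0 n) := by
  intro u v huv
  have swap : ∀ {u v : (wheelGraph n).edgeSet},
      (∃ k ∈ B0 n, (L n).dist u (F k) ≠ (L n).dist v (F k)) →
      ∃ w ∈ F '' B0 n, (L n).dist u w ≠ (L n).dist v w := by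
    rintro u v ⟨k, hk, hne⟩
    exact ⟨F k, ⟨k, hk, rfl⟩, hne⟩
  rcases edge_cases u with ⟨x, rfl⟩ | ⟨x, rfl⟩ <;> rcases edge_cases v with ⟨y, rfl⟩ | ⟨y, rfl⟩
  · exact swap (EE_chase (fun hc => huv (congrArg E hc)))
  · by_cases hy : y ∈ B0 n
    · refine ⟨F y, ⟨y, hy, rfl⟩, ?_⟩
      rw [SimpleGraph.dist_self]
      exact dEF_ne_zero x y
    · exact swap (EF_chase hy)
  · by_cases hx : x ∈ B0 n
    · refine ⟨F x, ⟨x, hx, rfl⟩, ?_⟩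
      rw [SimpleGraph.dist_self]
      exact (dEF_ne_zero y x).symm
    · obtain ⟨k, hk, hne⟩ := EF_chase (x := y) hx
      exact ⟨F k, ⟨k, hk, rfl⟩, hne.symm⟩
  · have hxy : x ≠ y := fun hc => huv (congrArg F hc)
    by_cases hx : x ∈ B0 n
    · refine ⟨F x, ⟨x, hx, rfl⟩, ?_⟩
      rw [SimpleGraph.dist_self]
      exact (dFF_ne_zero hxy.symm).symm
    · by_cases hy : y ∈ B0 n
      · refine ⟨F y, ⟨y, hy, rfl⟩, ?_⟩
        rw [SimpleGraph.dist_self (v := F y)]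
        exact dFF_ne_zero hxy
      · exact swap (FF_chase hxy hx hy)

lemma upper_member : (n - (n + 2) / 3) ∈
    {k | ∃ W : Set (wheelGraph n).edgeSet, W.ncard = k ∧ IsResolvingSet (L n) W} :=
  ⟨F '' B0 n, by rw [Set.ncard_image_of_injective _ F_injective]; exact B0_ncard, resolving_B0⟩

end WheelLG

/-- For every integer `n ≥ 6`, the metric dimension of the line graph of the wheel
graph `W_{1,n}` equals `n - ⌈n/3⌉` (note `⌈n/3⌉ = (n+2)/3` in natural division). -/
theorem metricDim_lineGraph_wheelGraph (n : ℕ) (hn : 6 ≤ n) :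
    metricDim (wheelGraph n).lineGraph = n - (n + 2) / 3 := by
  haveI : NeZero n := ⟨by omega⟩
  haveI : Fact (6 ≤ n) := ⟨hn⟩
  have hmem := WheelLG.upper_member (n := n)
  have hne : {k | ∃ W : Set (wheelGraph n).edgeSet, W.ncard = k ∧
      IsResolvingSet (WheelLG.L n) W}.Nonempty := ⟨_, hmem⟩
  have hle : metricDim (wheelGraph n).lineGraph ≤ n - (n + 2) / 3 := Nat.sInf_le hmem
  have hge : n - (n + 2) / 3 ≤ metricDim (wheelGraph n).lineGraph := by
    obtain ⟨W, hW, hresW⟩ := Nat.sInf_mem hne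
    rw [show metricDim (wheelGraph n).lineGraph = sInf {k | ∃ W : Set (wheelGraph n).edgeSet,
      W.ncard = k ∧ IsResolvingSet (WheelLG.L n) W} from rfl, ← hW]
    exact WheelLG.lower_bound hresW
  omega
end

section
/- The metric dimension of the line graph of the wheel graph satisfies dim(L(W_{1,3})) = 3, dim(L(W_{1,4})) = 3, and dim(L(W_{1,5})) = 4. -/
set_option maxRecDepth 10000
set_option maxHeartbeats 2000000


open SimpleGraph

variable {V : Type*}

instance wheelAdjDec (n : ℕ) : DecidableRel (wheelGraph n).Adj := fun u v => by
  show Decidable (u ≠ v ∧ _)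
  cases u <;> cases v <;> exact inferInstance

instance lgAdjDec (n : ℕ) : DecidableRel ((wheelGraph n).lineGraph).Adj := fun e f =>
  decidable_of_iff _ (lineGraph_adj_iff_exists (G := wheelGraph n) (e₁ := e) (e₂ := f)).symm

lemma dist_formula (G : SimpleGraph V) [DecidableEq V] [DecidableRel G.Adj]
    (h : ∀ u v : V, u ≠ v → ¬G.Adj u v → ∃ w, G.Adj u w ∧ G.Adj w v) (u v : V) :
    G.dist u v = if u = v then 0 else if G.Adj u v then 1 else 2 := by
  split_ifs with h1 h2
  · subst h1; exact dist_self
  · exact dist_eq_one_iff_adj.mpr h2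
  · obtain ⟨w, hw1, hw2⟩ := h u v h1 h2
    have hle : G.dist u v ≤ 2 := by
      simpa using SimpleGraph.dist_le (hw1.toWalk.append hw2.toWalk)
    have h0 : G.dist u v ≠ 0 := by
      intro h0
      rcases dist_eq_zero_iff_eq_or_not_reachable.mp h0 with h' | h'
      · exact h1 h'
      · exact h' ⟨hw1.toWalk.append hw2.toWalk⟩
    have hne1 : G.dist u v ≠ 1 := fun h' => h2 (dist_eq_one_iff_adj.mp h')
    omega

def resolves (G : SimpleGraph V) [DecidableEq V] [DecidableRel G.Adj] (s : Finset V) : Prop :=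
  ∀ u v : V, u ≠ v → ∃ w ∈ s,
    (if u = w then 0 else if G.Adj u w then 1 else 2 : ℕ) ≠
    (if v = w then 0 else if G.Adj v w then 1 else 2)

instance resolvesDec (G : SimpleGraph V) [Fintype V] [DecidableEq V] [DecidableRel G.Adj]
    (s : Finset V) : Decidable (resolves G s) := by unfold resolves; infer_instance

lemma resolves_iff (G : SimpleGraph V) [DecidableEq V] [DecidableRel G.Adj]
    (h : ∀ u v : V, u ≠ v → ¬G.Adj u v → ∃ w, G.Adj u w ∧ G.Adj w v) (s : Finset V) :
    IsResolvingSet G ↑s ↔ resolves G s := by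
  unfold IsResolvingSet resolves
  simp only [dist_formula G h, Finset.mem_coe]

lemma metricDim_eq (G : SimpleGraph V) [Fintype V] [DecidableEq V] [DecidableRel G.Adj]
    (m : ℕ) (h : ∀ u v : V, u ≠ v → ¬G.Adj u v → ∃ w, G.Adj u w ∧ G.Adj w v)
    (s : Finset V) (hcard : s.card = m) (hres : resolves G s)
    (hm : m - 1 ≤ Fintype.card V)
    (hlow : ∀ t : Finset V, t.card = m - 1 → ¬resolves G t) (hm0 : m ≠ 0) :
    metricDim G = m := by
  have hmem : m ∈ {k | ∃ W : Set V, W.ncard = k ∧ IsResolvingSet G W} :=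
    ⟨↑s, by simp [Set.ncard_coe_finset, hcard], (resolves_iff G h s).mpr hres⟩
  refine le_antisymm (Nat.sInf_le hmem) (le_csInf ⟨m, hmem⟩ ?_)
  rintro k ⟨W, hWcard, hWres⟩
  by_contra hk
  -- W.ncard = k ≤ m - 1
  have hfin : W.Finite := Set.toFinite W
  have hWle : hfin.toFinset.card ≤ m - 1 := by
    rw [← Set.ncard_eq_toFinset_card W hfin]; omega
  obtain ⟨t, hsub, htcard⟩ := Finset.exists_superset_card_eq hWle hm
  have htres : IsResolvingSet G ↑t := by
    intro u v huv
    obtain ⟨w, hw, hwd⟩ := hWres u v huv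
    exact ⟨w, hsub (hfin.mem_toFinset.mpr hw), hwd⟩
  exact hlow t htcard ((resolves_iff G h t).mp htres)

private theorem test3 : metricDim (wheelGraph 3).lineGraph = 3 := by
  apply metricDim_eq _ 3 (by decide)
    (({⟨s(none, some 0), by decide⟩, ⟨s(none, some 1), by decide⟩,
       ⟨s(some 0, some 1), by decide⟩} : Finset (wheelGraph 3).edgeSet))
  · decide
  · decide
  · decide
  · decide
  · decide


lemma hlow_of_pairs (G : SimpleGraph V) [Fintype V] [DecidableEq V] [DecidableRel G.Adj]
    (h : ∀ a b : V, ¬resolves G {a, b}) :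
    ∀ t : Finset V, t.card = 2 → ¬resolves G t := by
  intro t ht
  obtain ⟨a, b, -, rfl⟩ := Finset.card_eq_two.mp ht
  exact h a b

lemma hlow_of_triples (G : SimpleGraph V) [Fintype V] [DecidableEq V] [DecidableRel G.Adj]
    (h : ∀ a b c : V, ¬resolves G {a, b, c}) :
    ∀ t : Finset V, t.card = 3 → ¬resolves G t := by
  intro t ht
  obtain ⟨a, b, c, -, -, -, rfl⟩ := Finset.card_eq_three.mp ht
  exact h a b c

private theorem test4 : metricDim (wheelGraph 4).lineGraph = 3 := by
  apply metricDim_eq _ 3 (by decide)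
    (({⟨s(none, some 0), by decide⟩, ⟨s(none, some 1), by decide⟩,
       ⟨s(none, some 2), by decide⟩} : Finset (wheelGraph 4).edgeSet))
  · decide
  · decide
  · decide
  · exact hlow_of_pairs _ (by decide)
  · decide

private theorem test5 : metricDim (wheelGraph 5).lineGraph = 4 := by
  apply metricDim_eq _ 4 (by decide)
    (({⟨s(none, some 0), by decide⟩, ⟨s(none, some 1), by decide⟩,
       ⟨s(none, some 2), by decide⟩, ⟨s(none, some 3), by decide⟩} : Finset (wheelGraph 5).edgeSet))
  · decide
  · decide
  · decide
  · exact hlow_of_triples _ (by decide)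
  · decide


/-- `dim(L(W_{1,3})) = 3`, `dim(L(W_{1,4})) = 3`, and `dim(L(W_{1,5})) = 4`. -/
theorem metricDim_lineGraph_wheelGraph_small :
    metricDim (wheelGraph 3).lineGraph = 3 ∧
    metricDim (wheelGraph 4).lineGraph = 3 ∧
    metricDim (wheelGraph 5).lineGraph = 4 := ⟨test3, test4, test5⟩
end

section
/- Let B_n = (k_1+1, k_2+1, …, k_n+1) be a bouquet of n ≥ 2 circles with a cut-vertex, where k_n ≥ k_{n−1} ≥ … ≥ k_1 ≥ 2. Then the metric dimension of its line graph satisfies dim(L(B_n)) = 2n − 1. -/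
open SimpleGraph

variable {V : Type*}

namespace BqProof

variable {n : ℕ} {k : Fin n → ℕ}

abbrev X (n : ℕ) (k : Fin n → ℕ) := Σ i : Fin n, Fin (k i + 1)

lemma smk_eq {i : Fin n} {a b : Fin (k i)} (h : (a:ℕ) = (b:ℕ)) :
    (⟨i, a⟩ : Σ i, Fin (k i)) = ⟨i, b⟩ := by cases Fin.ext h; rfl

lemma smk_val {x y : Σ i : Fin n, Fin (k i)} (h : x = y) : (x.2 : ℕ) = (y.2 : ℕ) := by
  cases h; rfl

/-- the `c`-th vertex on circle `i`, with `pt i (k i) = none` (the cut vertex). -/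
def pt (k : Fin n → ℕ) (i : Fin n) (c : ℕ) : Option (Σ i : Fin n, Fin (k i)) :=
  if h : c < k i then some ⟨i, ⟨c, h⟩⟩ else none

/-- the `c`-th edge of circle `i`, `0 ≤ c ≤ k i`. -/
def E (k : Fin n → ℕ) (i : Fin n) (c : ℕ) : Sym2 (Option (Σ i : Fin n, Fin (k i))) :=
  s( (if c = 0 then none else pt k i (c-1)), pt k i c )

section basic
variable (hk : ∀ i, 2 ≤ k i)
include hk

lemma mem_E {v : Option (Σ i : Fin n, Fin (k i))} {i : Fin n} {c : ℕ} (hc : c ≤ k i) :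
    v ∈ E k i c ↔ (v = none ∧ (c = 0 ∨ c = k i)) ∨
      (∃ j : Fin (k i), v = some ⟨i, j⟩ ∧
        (((j:ℕ) = c - 1 ∧ c ≠ 0) ∨ ((j:ℕ) = c ∧ c ≠ k i))) := by
  have h2 := hk i
  rw [E, Sym2.mem_iff]
  rcases Nat.eq_zero_or_pos c with rfl | hpos
  · rw [if_pos rfl, pt, dif_pos (by omega)]
    constructor
    · rintro (rfl | rfl)
      · exact Or.inl ⟨rfl, by omega⟩
      · exact Or.inr ⟨⟨0, by omega⟩, rfl, Or.inr ⟨rfl, by omega⟩⟩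
    · rintro (⟨rfl, _⟩ | ⟨j, rfl, (⟨hj, hne⟩ | ⟨hj, hne⟩)⟩)
      · exact Or.inl rfl
      · exact absurd rfl hne
      · exact Or.inr (congrArg some (smk_eq (by simpa using hj)))
  · rcases eq_or_ne c (k i) with rfl | hck
    · rw [if_neg (by omega), pt, pt, dif_pos (by omega), dif_neg (by omega)]
      constructor
      · rintro (rfl | rfl)
        · exact Or.inr ⟨⟨k i - 1, by omega⟩, rfl, Or.inl ⟨rfl, by omega⟩⟩
        · exact Or.inl ⟨rfl, Or.inr rfl⟩
      · rintro (⟨rfl, _⟩ | ⟨j, rfl, (⟨hj, hne⟩ | ⟨hj, hne⟩)⟩)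
        · exact Or.inr rfl
        · exact Or.inl (congrArg some (smk_eq (by simpa using hj)))
        · exact absurd rfl hne
    · rw [if_neg (by omega), pt, pt, dif_pos (by omega), dif_pos (by omega)]
      constructor
      · rintro (rfl | rfl)
        · exact Or.inr ⟨_, rfl, Or.inl ⟨rfl, by omega⟩⟩
        · exact Or.inr ⟨_, rfl, Or.inr ⟨rfl, hck⟩⟩
      · rintro (⟨rfl, h⟩ | ⟨j, rfl, (⟨hj, hne⟩ | ⟨hj, hne⟩)⟩)
        · omega
        · exact Or.inl (congrArg some (smk_eq (by simpa using hj)))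
        · exact Or.inr (congrArg some (smk_eq (by simpa using hj)))

lemma E_mem_edgeSet (i : Fin n) {c : ℕ} (hc : c ≤ k i) :
    E k i c ∈ (bouquet n k).edgeSet := by
  have h2 := hk i
  rw [E, SimpleGraph.mem_edgeSet]
  rcases Nat.eq_zero_or_pos c with rfl | hpos
  · rw [if_pos rfl, pt, dif_pos (by omega)]
    exact ⟨by simp, Or.inl (by simp)⟩
  · rcases eq_or_ne c (k i) with rfl | hck
    · rw [if_neg (by omega), pt, pt, dif_pos (by omega), dif_neg (by omega)]
      exact ⟨by simp, Or.inr (Or.inr (by simp))⟩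
    · rw [if_neg (by omega), pt, pt, dif_pos (by omega), dif_pos (by omega)]
      refine ⟨fun h => ?_, Or.inl ⟨rfl, by simp; omega⟩⟩
      rw [Option.some.injEq] at h
      have := smk_val (k := k) h
      simp at this
      omega

lemma E_witness {i : Fin n} {a : ℕ} (ha : a ≤ k i) :
    some (⟨i, ⟨min a (k i - 1), by have := hk i; omega⟩⟩ : Σ i, Fin (k i)) ∈ E k i a := by
  have h2 := hk i
  rw [mem_E hk ha]
  refine Or.inr ⟨_, rfl, ?_⟩
  simp only
  omega

lemma E_inj {i j : Fin n} {a b : ℕ} (ha : a ≤ k i) (hb : b ≤ k j)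
    (h : E k i a = E k j b) : i = j ∧ a = b := by
  have h2 := hk i
  -- first components agree
  have hw := E_witness hk ha
  rw [h, mem_E hk hb] at hw
  rcases hw with ⟨h1, _⟩ | ⟨j', h1, hj'⟩
  · exact absurd h1 (by simp)
  · rw [Option.some.injEq] at h1
    have hij : i = j := congrArg Sigma.fst h1
    subst hij
    have hval := smk_val (k := k) h1
    simp only at hval
    refine ⟨rfl, ?_⟩
    have hw2 := E_witness hk hb
    rw [← h, mem_E hk ha] at hw2
    rcases hw2 with ⟨h3, _⟩ | ⟨j2, h3, hj2⟩
    · exact absurd h3 (by simp)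
    · have hval2 := smk_val (k := k) (Option.some_injective _ h3)
      simp only at hval2
      -- none membership condition
      have hnone : (none ∈ E k i a) ↔ (none ∈ E k i b) := by rw [h]
      rw [mem_E hk ha, mem_E hk hb] at hnone
      simp only [true_and, false_and, exists_false, or_false, reduceCtorEq,
        and_false] at hnone
      omega

lemma edge_surj {e : Sym2 (Option (Σ i : Fin n, Fin (k i)))}
    (he : e ∈ (bouquet n k).edgeSet) : ∃ i c, c ≤ k i ∧ E k i c = e := by
  induction e using Sym2.ind with
  | _ u v =>
    rw [SimpleGraph.mem_edgeSet, bouquet, SimpleGraph.fromRel_adj] at he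
    obtain ⟨hne, hr⟩ := he
    match u, v with
    | none, none => simp at hr
    | none, some a =>
      have h2 := hk a.1
      rcases hr with (h0 | hk1) | hf
      · refine ⟨a.1, 0, by omega, ?_⟩
        rw [E, if_pos rfl, pt, dif_pos (by omega)]
        exact congrArg (fun t => s(none, t)) (congrArg some (smk_eq (by simpa using h0.symm)))
      · refine ⟨a.1, k a.1, by omega, ?_⟩
        rw [E, if_neg (by omega), pt, pt, dif_pos (by omega), dif_neg (by omega)]
        rw [Sym2.eq_swap]
        exact congrArg (fun t => s(none, t)) (congrArg some (smk_eq (by simpa using hk1.symm)))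
      · exact hf.elim
    | some a, none =>
      have h2 := hk a.1
      rcases hr with hf | (h0 | hk1)
      · exact hf.elim
      · refine ⟨a.1, 0, by omega, ?_⟩
        rw [E, if_pos rfl, pt, dif_pos (by omega)]
        rw [Sym2.eq_swap]
        exact congrArg (fun t => s(t, none)) (congrArg some (smk_eq (by simpa using h0.symm)))
      · refine ⟨a.1, k a.1, by omega, ?_⟩
        rw [E, if_neg (by omega), pt, pt, dif_pos (by omega), dif_neg (by omega)]
        exact congrArg (fun t => s(t, none)) (congrArg some (smk_eq (by simpa using hk1.symm)))
    | some a, some b =>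
      rcases hr with ⟨hij, hv⟩ | ⟨hij, hv⟩
      · obtain ⟨ia, ja⟩ := a
        obtain ⟨ib, jb⟩ := b
        simp only at hij hv
        subst hij
        refine ⟨ia, (jb : ℕ), by omega, ?_⟩
        rw [E, if_neg (by omega), pt, pt, dif_pos (by omega), dif_pos jb.isLt]
        exact congrArg₂ (fun p q => s(p, q))
          (congrArg some (smk_eq (by simp only [Fin.val_mk]; omega)))
          (congrArg some (smk_eq (by simp only [Fin.val_mk])))
      · obtain ⟨ia, ja⟩ := a
        obtain ⟨ib, jb⟩ := b
        simp only at hij hv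
        subst hij
        refine ⟨ib, (ja : ℕ), by omega, ?_⟩
        rw [E, if_neg (by omega), pt, pt, dif_pos (by omega), dif_pos ja.isLt]
        rw [Sym2.eq_swap]
        exact congrArg₂ (fun p q => s(p, q))
          (congrArg some (smk_eq (by simp only [Fin.val_mk])))
          (congrArg some (smk_eq (by simp only [Fin.val_mk]; omega)))

/-- The encoding map from `X n k` to the vertex set of the line graph. -/
def F (x : X n k) : (bouquet n k).edgeSet :=
  ⟨E k x.1 x.2, E_mem_edgeSet hk x.1 (Fin.is_le x.2)⟩

lemma F_bijective : Function.Bijective (F hk) := by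
  constructor
  · rintro ⟨i, a⟩ ⟨j, b⟩ h
    have h' : E k i (a : ℕ) = E k j (b : ℕ) := congrArg Subtype.val h
    obtain ⟨hij, hab⟩ := E_inj hk (Fin.is_le a) (Fin.is_le b) h'
    subst hij
    cases Fin.ext hab
    rfl
  · rintro ⟨e, he⟩
    obtain ⟨i, c, hc, hE⟩ := edge_surj hk he
    exact ⟨⟨i, ⟨c, by omega⟩⟩, Subtype.ext hE⟩

/-- The line graph in explicit coordinates. -/
def H : SimpleGraph (X n k) := SimpleGraph.comap (F hk) (bouquet n k).lineGraph

lemma F_ne_iff {i j : Fin n} {a : Fin (k i + 1)} {b : Fin (k j + 1)} :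
    F hk ⟨i, a⟩ ≠ F hk ⟨j, b⟩ ↔ ¬(i = j ∧ (a:ℕ) = (b:ℕ)) := by
  constructor
  · rintro hne ⟨rfl, hab⟩
    exact hne (congrArg (F hk) (congrArg (Sigma.mk i) (Fin.ext hab)))
  · intro hne he
    have := E_inj hk (Fin.is_le a) (Fin.is_le b) (congrArg Subtype.val he)
    exact hne ⟨this.1, this.2⟩

lemma adj_iff {i j : Fin n} {a : Fin (k i + 1)} {b : Fin (k j + 1)} :
    (H hk).Adj ⟨i, a⟩ ⟨j, b⟩ ↔
      (i = j ∧ ((a:ℕ) + 1 = (b:ℕ) ∨ (b:ℕ) + 1 = (a:ℕ))) ∨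
      (¬(i = j ∧ (a:ℕ) = (b:ℕ)) ∧ ((a:ℕ) = 0 ∨ (a:ℕ) = k i) ∧
        ((b:ℕ) = 0 ∨ (b:ℕ) = k j)) := by
  have hka := hk i
  have hle_a : (a:ℕ) ≤ k i := Fin.is_le a
  have hle_b : (b:ℕ) ≤ k j := Fin.is_le b
  have : (H hk).Adj ⟨i, a⟩ ⟨j, b⟩ ↔ F hk ⟨i, a⟩ ≠ F hk ⟨j, b⟩ ∧
      ∃ v, v ∈ E k i (a:ℕ) ∧ v ∈ E k j (b:ℕ) :=
    SimpleGraph.lineGraph_adj_iff_exists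
  rw [this, F_ne_iff hk]
  constructor
  · rintro ⟨hne, v, h1, h2⟩
    rw [mem_E hk hle_a] at h1
    rw [mem_E hk hle_b] at h2
    rcases h1 with ⟨rfl, ga⟩ | ⟨j1, rfl, hj1⟩
    · rcases h2 with ⟨-, gb⟩ | ⟨j2, h2', -⟩
      · exact Or.inr ⟨hne, ga, gb⟩
      · exact absurd h2' (by simp)
    · rcases h2 with ⟨h2', -⟩ | ⟨j2, h2', hj2⟩
      · exact absurd h2' (by simp)
      · rw [Option.some.injEq] at h2'
        have hij : i = j := congrArg Sigma.fst h2'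
        subst hij
        have hval := smk_val (k := k) h2'
        simp only at hval
        have hj1le := j1.isLt
        refine Or.inl ⟨rfl, ?_⟩
        have hab : (a:ℕ) ≠ (b:ℕ) := fun h => hne ⟨rfl, h⟩
        omega
  · rintro (⟨rfl, hab⟩ | ⟨hne, ga, gb⟩)
    · refine ⟨by omega, some ⟨i, ⟨min (a:ℕ) (b:ℕ), by omega⟩⟩, ?_, ?_⟩
      · rw [mem_E hk hle_a]
        exact Or.inr ⟨_, rfl, by simp only [Fin.val_mk]; omega⟩
      · rw [mem_E hk hle_b]
        exact Or.inr ⟨_, rfl, by simp only [Fin.val_mk]; omega⟩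
    · refine ⟨hne, none, ?_, ?_⟩
      · rw [mem_E hk hle_a]; exact Or.inl ⟨rfl, ga⟩
      · rw [mem_E hk hle_b]; exact Or.inl ⟨rfl, gb⟩

lemma adj_of_step {i : Fin n} {a b : Fin (k i + 1)} (h : (a:ℕ) + 1 = (b:ℕ)) :
    (H hk).Adj ⟨i, a⟩ ⟨i, b⟩ := (adj_iff hk).mpr (Or.inl ⟨rfl, Or.inl h⟩)

lemma adj_of_gate {i j : Fin n} {a : Fin (k i + 1)} {b : Fin (k j + 1)}
    (h : ¬(i = j ∧ (a:ℕ) = (b:ℕ))) (ga : (a:ℕ) = 0 ∨ (a:ℕ) = k i)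
    (gb : (b:ℕ) = 0 ∨ (b:ℕ) = k j) : (H hk).Adj ⟨i, a⟩ ⟨j, b⟩ :=
  (adj_iff hk).mpr (Or.inr ⟨h, ga, gb⟩)

lemma exists_walk_chain (i : Fin n) :
    ∀ (d : ℕ) (a b : Fin (k i + 1)), (a:ℕ) + d = (b:ℕ) →
      ∃ p : (H hk).Walk ⟨i, a⟩ ⟨i, b⟩, p.length = d := by
  intro d
  induction d with
  | zero =>
    intro a b h
    cases Fin.ext (show (a:ℕ) = (b:ℕ) by omega)
    exact ⟨SimpleGraph.Walk.nil, rfl⟩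
  | succ d ih =>
    intro a b h
    have hb := b.isLt
    have ha1 : (a:ℕ) + 1 < k i + 1 := by omega
    obtain ⟨p, hp⟩ := ih ⟨(a:ℕ) + 1, ha1⟩ b (by simp only [Fin.val_mk]; omega)
    exact ⟨SimpleGraph.Walk.cons (adj_of_step hk (by simp only [Fin.val_mk])) p,
      by simp [hp]⟩

lemma exists_walk_le (i : Fin n) (a b : Fin (k i + 1)) (h : (a:ℕ) ≤ (b:ℕ)) :
    ∃ p : (H hk).Walk ⟨i, a⟩ ⟨i, b⟩, p.length = (b:ℕ) - (a:ℕ) :=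
  exists_walk_chain hk i ((b:ℕ) - (a:ℕ)) a b (by omega)

lemma exists_walk_ge (i : Fin n) (a b : Fin (k i + 1)) (h : (b:ℕ) ≤ (a:ℕ)) :
    ∃ p : (H hk).Walk ⟨i, a⟩ ⟨i, b⟩, p.length = (a:ℕ) - (b:ℕ) := by
  obtain ⟨p, hp⟩ := exists_walk_le hk i b a h
  exact ⟨p.reverse, by simp [hp]⟩

end basic

/-- potential bound: a 1-Lipschitz function vanishing at `w` bounds distance from below -/
lemma potential_le_dist {α : Type*} {G : SimpleGraph α} {φ : α → ℕ}
    (hlip : ∀ x y, G.Adj x y → φ y ≤ φ x + 1) {w v : α} (h0 : φ w = 0)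
    (hr : G.Reachable w v) : φ v ≤ G.dist w v := by
  obtain ⟨p, hp⟩ := hr.exists_walk_length_eq_dist
  rw [← hp]
  have key : ∀ {u v : α} (p : G.Walk u v), φ v ≤ φ u + p.length := by
    intro u v p
    induction p with
    | nil => simp
    | cons h q ih =>
      have := hlip _ _ h
      simp only [SimpleGraph.Walk.length_cons]
      omega
  have := key p
  omega

section basic
variable (hk : ∀ i, 2 ≤ k i)
include hk

lemma dist_eq_of (w : X n k) (φ : X n k → ℕ) (h0 : φ w = 0)
    (hlip : ∀ x y, (H hk).Adj x y → φ y ≤ φ x + 1)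
    (hup : ∀ x, ∃ p : (H hk).Walk w x, p.length = φ x) :
    ∀ x, (H hk).dist w x = φ x := by
  intro x
  obtain ⟨p, hp⟩ := hup x
  refine le_antisymm (hp ▸ SimpleGraph.dist_le p) (potential_le_dist hlip h0 ⟨p⟩)

end basic

/-- distance from a vertex of cycle `j` to the nearest gate of cycle `j` -/
def gd (k : Fin n → ℕ) (j : Fin n) (c : ℕ) : ℕ := min c (k j - c)

/-- distance from the gate edge `⟨i,0⟩` -/
def Phi0 (k : Fin n → ℕ) (i : Fin n) (x : X n k) : ℕ :=
  if x.1 = i then min (x.2:ℕ) (k i + 1 - (x.2:ℕ)) else gd k x.1 (x.2:ℕ) + 1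

/-- distance from the gate edge `⟨i, k i⟩` -/
def PhiK (k : Fin n → ℕ) (i : Fin n) (x : X n k) : ℕ :=
  if x.1 = i then min (k i - (x.2:ℕ)) ((x.2:ℕ) + 1) else gd k x.1 (x.2:ℕ) + 1

/-- distance from the edge `⟨i, 1⟩` -/
def Phi1 (k : Fin n → ℕ) (i : Fin n) (x : X n k) : ℕ :=
  if x.1 = i then (if (x.2:ℕ) = 0 then 1 else min ((x.2:ℕ) - 1) (k i + 2 - (x.2:ℕ)))
  else gd k x.1 (x.2:ℕ) + 2

section dists
variable (hk : ∀ i, 2 ≤ k i)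
include hk

lemma dist_L0 {i : Fin n} {a : Fin (k i + 1)} (ha : (a:ℕ) = 0) (x : X n k) :
    (H hk).dist ⟨i, a⟩ x = Phi0 k i x := by
  refine dist_eq_of hk _ _ (by simp [Phi0, ha]) ?_ ?_ x
  · rintro ⟨p, c⟩ ⟨q, b⟩ hxy
    rw [adj_iff hk] at hxy
    have hc := Fin.is_le c
    have hb := Fin.is_le b
    have hkp := hk p
    have hki := hk i
    rcases hxy with ⟨rfl, hstep⟩ | ⟨hne, gc, gb⟩
    · by_cases hpi : p = i
      · subst hpi; simp only [Phi0, if_pos rfl, eq_self_iff_true, if_true]; omega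
      · simp only [Phi0, if_neg hpi, gd]; omega
    · have hkq := hk q
      by_cases hpi : p = i <;> by_cases hqi : q = i
      · subst hpi; subst hqi; simp only [Phi0, if_pos rfl, eq_self_iff_true, if_true]; omega
      · subst hpi; simp only [Phi0, if_pos rfl, if_neg hqi, gd]; omega
      · subst hqi; simp only [Phi0, if_pos rfl, eq_self_iff_true, if_true, if_neg hpi, gd]; omega
      · simp only [Phi0, if_neg hpi, if_neg hqi, gd]; omega
  · rintro ⟨j, b⟩
    have hb := Fin.is_le b
    have hki := hk i
    by_cases hji : j = i
    · subst hji
      simp only [Phi0, if_pos rfl, eq_self_iff_true, if_true]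
      rcases le_or_gt ((b:ℕ)) (k j + 1 - (b:ℕ)) with hcase | hcase
      · obtain ⟨p, hp⟩ := exists_walk_le hk j a b (by omega)
        exact ⟨p, by omega⟩
      · have hKlt : k j < k j + 1 := by omega
        have hadj : (H hk).Adj ⟨j, a⟩ ⟨j, ⟨k j, hKlt⟩⟩ :=
          adj_of_gate hk (by simp only [Fin.val_mk]; omega) (Or.inl ha)
            (Or.inr (by simp only [Fin.val_mk]))
        obtain ⟨p, hp⟩ := exists_walk_ge hk j ⟨k j, hKlt⟩ b (by simp only [Fin.val_mk]; omega)
        refine ⟨SimpleGraph.Walk.cons hadj p, ?_⟩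
        simp only [SimpleGraph.Walk.length_cons, hp, Fin.val_mk]
        omega
    · simp only [Phi0, if_neg hji, gd]
      have hkj := hk j
      rcases le_or_gt ((b:ℕ)) (k j - (b:ℕ)) with hcase | hcase
      · have h0lt : 0 < k j + 1 := by omega
        have hadj : (H hk).Adj ⟨i, a⟩ ⟨j, ⟨0, h0lt⟩⟩ :=
          adj_of_gate hk (by intro hcon; exact hji hcon.1.symm) (Or.inl ha)
            (Or.inl (by simp only [Fin.val_mk]))
        obtain ⟨p, hp⟩ := exists_walk_le hk j ⟨0, h0lt⟩ b (by simp only [Fin.val_mk]; omega)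
        refine ⟨SimpleGraph.Walk.cons hadj p, ?_⟩
        simp only [SimpleGraph.Walk.length_cons, hp, Fin.val_mk]
        omega
      · have hKlt : k j < k j + 1 := by omega
        have hadj : (H hk).Adj ⟨i, a⟩ ⟨j, ⟨k j, hKlt⟩⟩ :=
          adj_of_gate hk (by intro hcon; exact hji hcon.1.symm) (Or.inl ha)
            (Or.inr (by simp only [Fin.val_mk]))
        obtain ⟨p, hp⟩ := exists_walk_ge hk j ⟨k j, hKlt⟩ b (by simp only [Fin.val_mk]; omega)
        refine ⟨SimpleGraph.Walk.cons hadj p, ?_⟩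
        simp only [SimpleGraph.Walk.length_cons, hp, Fin.val_mk]
        omega

lemma dist_LK {i : Fin n} {a : Fin (k i + 1)} (ha : (a:ℕ) = k i) (x : X n k) :
    (H hk).dist ⟨i, a⟩ x = PhiK k i x := by
  refine dist_eq_of hk _ _ (by simp [PhiK, ha]) ?_ ?_ x
  · rintro ⟨p, c⟩ ⟨q, b⟩ hxy
    rw [adj_iff hk] at hxy
    have hc := Fin.is_le c
    have hb := Fin.is_le b
    have hkp := hk p
    have hki := hk i
    rcases hxy with ⟨rfl, hstep⟩ | ⟨hne, gc, gb⟩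
    · by_cases hpi : p = i
      · subst hpi; simp only [PhiK, if_pos rfl, eq_self_iff_true, if_true]; omega
      · simp only [PhiK, if_neg hpi, gd]; omega
    · have hkq := hk q
      by_cases hpi : p = i <;> by_cases hqi : q = i
      · subst hpi; subst hqi; simp only [PhiK, if_pos rfl, eq_self_iff_true, if_true]; omega
      · subst hpi; simp only [PhiK, if_pos rfl, if_neg hqi, gd]; omega
      · subst hqi; simp only [PhiK, if_pos rfl, eq_self_iff_true, if_true, if_neg hpi, gd]; omega
      · simp only [PhiK, if_neg hpi, if_neg hqi, gd]; omega
  · rintro ⟨j, b⟩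
    have hb := Fin.is_le b
    have hki := hk i
    by_cases hji : j = i
    · subst hji
      simp only [PhiK, if_pos rfl, eq_self_iff_true, if_true]
      rcases le_or_gt (k j - (b:ℕ)) ((b:ℕ) + 1) with hcase | hcase
      · obtain ⟨p, hp⟩ := exists_walk_ge hk j a b (by omega)
        exact ⟨p, by omega⟩
      · have h0lt : 0 < k j + 1 := by omega
        have hadj : (H hk).Adj ⟨j, a⟩ ⟨j, ⟨0, h0lt⟩⟩ :=
          adj_of_gate hk (by simp only [Fin.val_mk]; omega) (Or.inr ha)
            (Or.inl (by simp only [Fin.val_mk]))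
        obtain ⟨p, hp⟩ := exists_walk_le hk j ⟨0, h0lt⟩ b (by simp only [Fin.val_mk]; omega)
        refine ⟨SimpleGraph.Walk.cons hadj p, ?_⟩
        simp only [SimpleGraph.Walk.length_cons, hp, Fin.val_mk]
        omega
    · simp only [PhiK, if_neg hji, gd]
      have hkj := hk j
      rcases le_or_gt ((b:ℕ)) (k j - (b:ℕ)) with hcase | hcase
      · have h0lt : 0 < k j + 1 := by omega
        have hadj : (H hk).Adj ⟨i, a⟩ ⟨j, ⟨0, h0lt⟩⟩ :=
          adj_of_gate hk (by intro hcon; exact hji hcon.1.symm) (Or.inr ha)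
            (Or.inl (by simp only [Fin.val_mk]))
        obtain ⟨p, hp⟩ := exists_walk_le hk j ⟨0, h0lt⟩ b (by simp only [Fin.val_mk]; omega)
        refine ⟨SimpleGraph.Walk.cons hadj p, ?_⟩
        simp only [SimpleGraph.Walk.length_cons, hp, Fin.val_mk]
        omega
      · have hKlt : k j < k j + 1 := by omega
        have hadj : (H hk).Adj ⟨i, a⟩ ⟨j, ⟨k j, hKlt⟩⟩ :=
          adj_of_gate hk (by intro hcon; exact hji hcon.1.symm) (Or.inr ha)
            (Or.inr (by simp only [Fin.val_mk]))
        obtain ⟨p, hp⟩ := exists_walk_ge hk j ⟨k j, hKlt⟩ b (by simp only [Fin.val_mk]; omega)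
        refine ⟨SimpleGraph.Walk.cons hadj p, ?_⟩
        simp only [SimpleGraph.Walk.length_cons, hp, Fin.val_mk]
        omega

lemma dist_L1 {i : Fin n} {a : Fin (k i + 1)} (ha : (a:ℕ) = 1) (x : X n k) :
    (H hk).dist ⟨i, a⟩ x = Phi1 k i x := by
  have hki := hk i
  refine dist_eq_of hk _ _ (by simp [Phi1, ha]) ?_ ?_ x
  · rintro ⟨p, c⟩ ⟨q, b⟩ hxy
    rw [adj_iff hk] at hxy
    have hc := Fin.is_le c
    have hb := Fin.is_le b
    have hkp := hk p
    rcases hxy with ⟨rfl, hstep⟩ | ⟨hne, gc, gb⟩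
    · by_cases hpi : p = i
      · subst hpi; simp only [Phi1, if_pos rfl, eq_self_iff_true, if_true]; split_ifs <;> omega
      · simp only [Phi1, if_neg hpi, gd]; omega
    · have hkq := hk q
      by_cases hpi : p = i <;> by_cases hqi : q = i
      · subst hpi; subst hqi; simp only [Phi1, if_pos rfl, eq_self_iff_true, if_true]; split_ifs <;> omega
      · subst hpi; simp only [Phi1, if_pos rfl, if_neg hqi, gd]; split_ifs <;> omega
      · subst hqi; simp only [Phi1, if_pos rfl, eq_self_iff_true, if_true, if_neg hpi, gd]; split_ifs <;> omega
      · simp only [Phi1, if_neg hpi, if_neg hqi, gd]; omega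
  · rintro ⟨j, b⟩
    have hb := Fin.is_le b
    have h0i : 0 < k i + 1 := by omega
    have hadj0 : (H hk).Adj ⟨i, a⟩ ⟨i, ⟨0, h0i⟩⟩ :=
      (adj_of_step hk (by simp only [Fin.val_mk]; omega)).symm
    by_cases hji : j = i
    · subst hji
      simp only [Phi1, if_pos rfl, eq_self_iff_true, if_true]
      rcases Nat.eq_zero_or_pos (b:ℕ) with hb0 | hbpos
      · rw [if_pos hb0]
        obtain ⟨p, hp⟩ := exists_walk_ge hk j a b (by omega)
        exact ⟨p, by omega⟩
      · rw [if_neg (by omega)]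
        rcases le_or_gt ((b:ℕ) - 1) (k j + 2 - (b:ℕ)) with hcase | hcase
        · obtain ⟨p, hp⟩ := exists_walk_le hk j a b (by omega)
          exact ⟨p, by omega⟩
        · have hKlt : k j < k j + 1 := by omega
          have hadjK : (H hk).Adj ⟨j, ⟨0, h0i⟩⟩ ⟨j, ⟨k j, hKlt⟩⟩ :=
            adj_of_gate hk (by simp only [Fin.val_mk]; omega)
              (Or.inl (by simp only [Fin.val_mk])) (Or.inr (by simp only [Fin.val_mk]))
          obtain ⟨p, hp⟩ := exists_walk_ge hk j ⟨k j, hKlt⟩ b (by simp only [Fin.val_mk]; omega)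
          refine ⟨SimpleGraph.Walk.cons hadj0 (SimpleGraph.Walk.cons hadjK p), ?_⟩
          simp only [SimpleGraph.Walk.length_cons, hp, Fin.val_mk]
          omega
    · simp only [Phi1, if_neg hji, gd]
      have hkj := hk j
      rcases le_or_gt ((b:ℕ)) (k j - (b:ℕ)) with hcase | hcase
      · have h0lt : 0 < k j + 1 := by omega
        have hadj : (H hk).Adj ⟨i, ⟨0, h0i⟩⟩ ⟨j, ⟨0, h0lt⟩⟩ :=
          adj_of_gate hk (by intro hcon; exact hji hcon.1.symm)
            (Or.inl (by simp only [Fin.val_mk])) (Or.inl (by simp only [Fin.val_mk]))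
        obtain ⟨p, hp⟩ := exists_walk_le hk j ⟨0, h0lt⟩ b (by simp only [Fin.val_mk]; omega)
        refine ⟨SimpleGraph.Walk.cons hadj0 (SimpleGraph.Walk.cons hadj p), ?_⟩
        simp only [SimpleGraph.Walk.length_cons, hp, Fin.val_mk]
        omega
      · have hKlt : k j < k j + 1 := by omega
        have hadj : (H hk).Adj ⟨i, ⟨0, h0i⟩⟩ ⟨j, ⟨k j, hKlt⟩⟩ :=
          adj_of_gate hk (by intro hcon; exact hji hcon.1.symm)
            (Or.inl (by simp only [Fin.val_mk])) (Or.inr (by simp only [Fin.val_mk]))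
        obtain ⟨p, hp⟩ := exists_walk_ge hk j ⟨k j, hKlt⟩ b (by simp only [Fin.val_mk]; omega)
        refine ⟨SimpleGraph.Walk.cons hadj0 (SimpleGraph.Walk.cons hadj p), ?_⟩
        simp only [SimpleGraph.Walk.length_cons, hp, Fin.val_mk]
        omega

end dists

section transfer

variable {α β : Type*} {G : SimpleGraph α} {G' : SimpleGraph β}

lemma iso_dist (φ : G ≃g G') (u v : α) : G'.dist (φ u) (φ v) = G.dist u v := by
  by_cases hr : G.Reachable u v
  · have hr' : G'.Reachable (φ u) (φ v) := hr.map φ.toHom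
    refine le_antisymm ?_ ?_
    · obtain ⟨p, hp⟩ := hr.exists_walk_length_eq_dist
      calc G'.dist (φ u) (φ v) ≤ (p.map φ.toHom).length := SimpleGraph.dist_le _
        _ = G.dist u v := by rw [SimpleGraph.Walk.length_map, hp]
    · obtain ⟨p, hp⟩ := hr'.exists_walk_length_eq_dist
      have h2 := SimpleGraph.dist_le (p.map φ.symm.toHom)
      rw [SimpleGraph.Walk.length_map, hp,
        show φ.symm.toHom (φ u) = u by simp, show φ.symm.toHom (φ v) = v by simp] at h2
      exact h2
  · have hr' : ¬ G'.Reachable (φ u) (φ v) := by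
      intro h
      have h2 := h.map φ.symm.toHom
      rw [show φ.symm.toHom (φ u) = u by simp, show φ.symm.toHom (φ v) = v by simp] at h2
      exact hr h2
    rw [SimpleGraph.dist_eq_zero_of_not_reachable hr,
      SimpleGraph.dist_eq_zero_of_not_reachable hr']

/-- `IsResolvingSet` transfers along graph isomorphisms. -/
lemma isResolvingSet_image (φ : G ≃g G') {W : Set α} (hW : IsResolvingSet G W) :
    IsResolvingSet G' (φ '' W) := by
  intro u v huv
  obtain ⟨w, hwW, hw⟩ := hW (φ.symm u) (φ.symm v)
    (fun h => huv (by simpa using congrArg φ h))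
  refine ⟨φ w, Set.mem_image_of_mem _ hwW, ?_⟩
  have h1 := iso_dist φ (φ.symm u) w
  have h2 := iso_dist φ (φ.symm v) w
  simp only [RelIso.apply_symm_apply] at h1 h2
  rw [h1, h2]
  exact hw

lemma resolv_subset (ψ : G ≃g G') :
    {m | ∃ W : Set α, W.ncard = m ∧ IsResolvingSet G W} ⊆
      {m | ∃ W : Set β, W.ncard = m ∧ IsResolvingSet G' W} := by
  rintro m ⟨W, hcard, hres⟩
  exact ⟨ψ '' W, by rw [Set.ncard_image_of_injective _ (RelIso.injective ψ)]; exact hcard,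
    isResolvingSet_image ψ hres⟩

lemma metricDim_eq_of_iso (φ : G ≃g G') : metricDim G = metricDim G' := by
  rw [metricDim, metricDim]
  congr 1
  exact Set.Subset.antisymm (resolv_subset φ) (resolv_subset φ.symm)

end transfer

/-- the gate vertex `⟨i, k i⟩` -/
def vK (i : Fin n) : X n k := ⟨i, ⟨k i, Nat.lt_succ_self _⟩⟩

/-- the distinguished index `n-1` -/
def i0 (h : 2 ≤ n) : Fin n := ⟨n - 1, by omega⟩

def v1 (hk : ∀ i, 2 ≤ k i) (i : Fin n) : X n k := ⟨i, ⟨1, by have := hk i; omega⟩⟩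

/-- the resolving set -/
def Wset (hn : 2 ≤ n) (hk : ∀ i, 2 ≤ k i) : Set (X n k) :=
  Set.range vK ∪ (v1 hk '' {i | i ≠ i0 hn})

lemma vK_injective : Function.Injective (vK : Fin n → X n k) :=
  fun i j h => congrArg Sigma.fst h

lemma v1_injective (hk : ∀ i, 2 ≤ k i) : Function.Injective (v1 hk : Fin n → X n k) :=
  fun i j h => congrArg Sigma.fst h

section main
variable (hn : 2 ≤ n) (hk : ∀ i, 2 ≤ k i)

lemma ncard_Wset : (Wset hn hk : Set (X n k)).ncard = 2 * n - 1 := by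
  have hdisj : Disjoint (Set.range (vK : Fin n → X n k)) (v1 hk '' {i | i ≠ i0 hn}) := by
    rw [Set.disjoint_left]
    rintro x ⟨i, rfl⟩ ⟨j, -, hj⟩
    have h1 : (((vK i : X n k)).2 : ℕ) = k i := rfl
    have h2 : (((v1 hk j : X n k)).2 : ℕ) = 1 := rfl
    have h3 : i = j := (congrArg Sigma.fst hj).symm
    rw [hj] at h2
    subst h3
    have := hk i
    omega
  rw [Wset, Set.ncard_union_eq hdisj (Set.toFinite _) (Set.toFinite _)]
  have h1 : (Set.range (vK : Fin n → X n k)).ncard = n := by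
    rw [← Set.image_univ, Set.ncard_image_of_injective _ vK_injective, Set.ncard_univ]
    simp
  have h2 : ((v1 hk '' {i | i ≠ i0 hn}) : Set (X n k)).ncard = n - 1 := by
    rw [Set.ncard_image_of_injective _ (v1_injective hk)]
    have : ({i | i ≠ i0 hn} : Set (Fin n)) = Set.univ \ {i0 hn} := by
      ext t; simp
    rw [this, Set.ncard_diff_singleton_of_mem (Set.mem_univ _), Set.ncard_univ]
    simp
  rw [h1, h2]
  omega

lemma resolving_Wset : IsResolvingSet (H hk) (Wset hn hk) := by
  intro u v huv
  by_contra hcon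
  push_neg at hcon
  have hK : ∀ i : Fin n, PhiK k i u = PhiK k i v := by
    intro i
    have h := hcon (vK i) (Or.inl ⟨i, rfl⟩)
    rwa [SimpleGraph.dist_comm, dist_LK hk rfl u,
      SimpleGraph.dist_comm, dist_LK hk rfl v] at h
  have h1 : ∀ i : Fin n, i ≠ i0 hn → Phi1 k i u = Phi1 k i v := by
    intro i hi
    have h := hcon (v1 hk i) (Or.inr ⟨i, hi, rfl⟩)
    rwa [SimpleGraph.dist_comm, dist_L1 hk rfl u,
      SimpleGraph.dist_comm, dist_L1 hk rfl v] at h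
  obtain ⟨l, c⟩ := u
  obtain ⟨l', c'⟩ := v
  have hc := Fin.is_le c
  have hc' := Fin.is_le c'
  have hkl := hk l
  have hkl' := hk l'
  by_cases hll : l = l'
  · subst hll
    -- same cycle
    refine huv (congrArg (Sigma.mk l) (Fin.ext ?_))
    have hKl := hK l
    simp only [PhiK, if_pos rfl, eq_self_iff_true, if_true] at hKl
    have hj : ∃ j : Fin n, j ≠ l := by
      rcases eq_or_ne l ⟨0, by omega⟩ with h0 | h0
      · refine ⟨⟨1, by omega⟩, fun hcon2 => ?_⟩
        have h0' := congrArg Fin.val h0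
        have h2' := congrArg Fin.val hcon2
        simp only [Fin.val_mk] at h0' h2'
        omega
      · exact ⟨⟨0, by omega⟩, fun hcon2 => h0 hcon2.symm⟩
    obtain ⟨j, hjl⟩ := hj
    have hKj := hK j
    simp only [PhiK, if_neg hjl.symm, gd] at hKj
    omega
  · exfalso
    have hI := hK l
    simp only [PhiK, if_pos rfl, eq_self_iff_true, if_true, if_neg (Ne.symm hll), gd] at hI
    have hII := hK l'
    simp only [PhiK, if_pos rfl, eq_self_iff_true, if_true, if_neg hll, gd] at hII
    by_cases hl : l = i0 hn
    · have hl' : l' ≠ i0 hn := fun h => hll (h ▸ hl)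
      have hIV := h1 l' hl'
      simp only [Phi1, if_pos rfl, eq_self_iff_true, if_true, if_neg hll, gd] at hIV
      split_ifs at hIV <;> omega
    · have hIII := h1 l hl
      simp only [Phi1, if_pos rfl, eq_self_iff_true, if_true, if_neg (Ne.symm hll), gd] at hIII
      split_ifs at hIII <;> omega

end main

/-- the gate vertex `⟨i, 0⟩` -/
def v0 (i : Fin n) : X n k := ⟨i, ⟨0, Nat.succ_pos _⟩⟩

lemma xne {i : Fin n} {a b : Fin (k i + 1)} (h : (a:ℕ) ≠ (b:ℕ)) :
    (⟨i, a⟩ : X n k) ≠ ⟨i, b⟩ :=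
  fun he => h (congrArg (fun t : X n k => (t.2 : ℕ)) he)

section lower
variable (hk : ∀ i, 2 ≤ k i)
include hk

lemma gate_dist_out (u w : X n k) (ha : (u.2:ℕ) = 0 ∨ (u.2:ℕ) = k u.1)
    (hw : w.1 ≠ u.1) : (H hk).dist u w = gd k w.1 (w.2:ℕ) + 1 := by
  obtain ⟨i, a⟩ := u
  rcases ha with ha | ha
  · rw [dist_L0 hk ha w, Phi0, if_neg hw]
  · rw [dist_LK hk ha w, PhiK, if_neg hw]

lemma v0_ne_vK (i : Fin n) : (v0 i : X n k) ≠ vK i :=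
  xne (by have := hk i; simp only [v0, vK, Fin.val_mk]; omega)

lemma fiber_nonempty {W : Set (X n k)} (hres : IsResolvingSet (H hk) W) (i : Fin n) :
    ∃ x ∈ W, x.1 = i := by
  by_contra hex
  push_neg at hex
  obtain ⟨w, hwW, hwd⟩ := hres (v0 i) (vK i) (v0_ne_vK hk i)
  exact hwd (by rw [gate_dist_out hk (v0 i) w (Or.inl rfl) (hex w hwW),
    gate_dist_out hk (vK i) w (Or.inr rfl) (hex w hwW)])

lemma key_two {W : Set (X n k)} (hres : IsResolvingSet (H hk) W) {i j : Fin n}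
    (hij : i ≠ j)
    (hi : ∀ x ∈ W, x.1 = i → ∀ y ∈ W, y.1 = i → x = y)
    (hj : ∀ x ∈ W, x.1 = j → ∀ y ∈ W, y.1 = j → x = y) : False := by
  have hki := hk i
  have hkj := hk j
  obtain ⟨wi, hwiW, hwi1⟩ := fiber_nonempty hk hres i
  obtain ⟨wj, hwjW, hwj1⟩ := fiber_nonempty hk hres j
  obtain ⟨p, rfl⟩ : ∃ p : Fin (k i + 1), wi = ⟨i, p⟩ := by
    obtain ⟨a, b⟩ := wi
    simp only at hwi1
    subst hwi1
    exact ⟨b, rfl⟩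
  obtain ⟨q, rfl⟩ : ∃ q : Fin (k j + 1), wj = ⟨j, q⟩ := by
    obtain ⟨a, b⟩ := wj
    simp only at hwj1
    subst hwj1
    exact ⟨b, rfl⟩
  have h06 := Fin.is_le p
  have hq6 := Fin.is_le q
  have hWi : ∀ x ∈ W, x.1 = i → x = ⟨i, p⟩ := fun x hx h1 => hi x hx h1 _ hwiW rfl
  have hWj : ∀ x ∈ W, x.1 = j → x = ⟨j, q⟩ := fun x hx h1 => hj x hx h1 _ hwjW rfl
  -- central-landmark degenerate cases
  have central : ∀ (i' : Fin n) (p' : Fin (k i' + 1)),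
      (∀ x ∈ W, x.1 = i' → x = ⟨i', p'⟩) → 2 * (p' : ℕ) = k i' → False := by
    intro i' p' hWc hpc
    have hki' := hk i'
    obtain ⟨w, hwW, hwd⟩ := hres (v0 i') (vK i') (v0_ne_vK hk i')
    apply hwd
    by_cases hw : w.1 = i'
    · rw [hWc w hwW hw]
      have e1 : (H hk).dist (v0 i') ⟨i', p'⟩ = Phi0 k i' ⟨i', p'⟩ := dist_L0 hk rfl _
      have e2 : (H hk).dist (vK i') ⟨i', p'⟩ = PhiK k i' ⟨i', p'⟩ := dist_LK hk rfl _
      rw [e1, e2]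
      simp only [Phi0, PhiK, v0, vK, if_pos rfl, eq_self_iff_true, if_true]
      have := Fin.is_le p'
      omega
    · rw [gate_dist_out hk (v0 i') w (Or.inl rfl) hw,
        gate_dist_out hk (vK i') w (Or.inr rfl) hw]
  by_cases hpi : 2 * (p : ℕ) = k i
  · exact central i p hWi hpi
  by_cases hqj : 2 * (q : ℕ) = k j
  · exact central j q hWj hqj
  -- both landmarks are strictly on one side; pick the far gates
  have claim : ∀ (i' : Fin n) (p' : Fin (k i' + 1)), 2 * (p' : ℕ) ≠ k i' →
      ∃ u : X n k, u.1 = i' ∧ ((u.2:ℕ) = 0 ∨ (u.2:ℕ) = k u.1) ∧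
        (H hk).dist u ⟨i', p'⟩ = gd k i' (p' : ℕ) + 1 := by
    intro i' p' hside
    have hki' := hk i'
    have hple := Fin.is_le p'
    rcases Nat.lt_or_ge (2 * (p' : ℕ)) (k i') with hlt | hge
    · refine ⟨vK i', rfl, Or.inr rfl, ?_⟩
      rw [dist_LK hk rfl]
      simp only [PhiK, vK, if_pos rfl, eq_self_iff_true, if_true, gd]
      omega
    · refine ⟨v0 i', rfl, Or.inl rfl, ?_⟩
      rw [dist_L0 hk rfl]
      simp only [Phi0, v0, if_pos rfl, eq_self_iff_true, if_true, gd]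
      omega
  obtain ⟨u, hu1, hu2, hud⟩ := claim i p hpi
  obtain ⟨v, hv1, hv2, hvd⟩ := claim j q hqj
  obtain ⟨w, hwW, hwd⟩ := hres u v (by
    intro he
    apply hij
    rw [← hu1, ← hv1]
    exact congrArg Sigma.fst he)
  apply hwd
  by_cases hw : w.1 = i
  · rw [hWi w hwW hw, hud, gate_dist_out hk v ⟨i, p⟩ hv2 (by rw [hv1]; exact hij)]
  · by_cases hw2 : w.1 = j
    · rw [hWj w hwW hw2, hvd, gate_dist_out hk u ⟨j, q⟩ hu2 (by rw [hu1]; exact hij.symm)]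
    · rw [gate_dist_out hk u w hu2 (by rw [hu1]; exact hw),
        gate_dist_out hk v w hv2 (by rw [hv1]; exact hw2)]

lemma lower_bound (hn : 2 ≤ n) {W : Set (X n k)} (hres : IsResolvingSet (H hk) W) :
    2 * n - 1 ≤ W.ncard := by
  classical
  have hcard : W.ncard = W.toFinset.card := Set.ncard_eq_toFinset_card' W
  set S : Finset (X n k) := W.toFinset with hS
  set fc : Fin n → ℕ := fun i => (S.filter (fun x => x.1 = i)).card with hfc
  have hsum : S.card = ∑ i, fc i :=
    Finset.card_eq_sum_card_fiberwise (fun x _ => Finset.mem_univ x.1)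
  have hone : ∀ i, 1 ≤ fc i := by
    intro i
    obtain ⟨x, hxW, hx1⟩ := fiber_nonempty hk hres i
    exact Finset.card_pos.mpr ⟨x, Finset.mem_filter.mpr ⟨Set.mem_toFinset.mpr hxW, hx1⟩⟩
  have hsub : ∀ i, fc i ≤ 1 → (∀ x ∈ W, x.1 = i → ∀ y ∈ W, y.1 = i → x = y) := by
    intro i hfi x hx hx1 y hy hy1
    exact Finset.card_le_one.mp hfi x
      (Finset.mem_filter.mpr ⟨Set.mem_toFinset.mpr hx, hx1⟩) y
      (Finset.mem_filter.mpr ⟨Set.mem_toFinset.mpr hy, hy1⟩)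
  by_cases hbad : ∃ i, fc i ≤ 1
  · obtain ⟨i1, hi1⟩ := hbad
    have h2 : ∀ j, j ≠ i1 → 2 ≤ fc j := by
      intro j hj
      by_contra hle
      push_neg at hle
      exact key_two hk hres (Ne.symm hj) (hsub i1 hi1) (hsub j (by omega))
    have hins := Finset.add_sum_erase Finset.univ fc (Finset.mem_univ i1)
    have hbound : ∑ _x ∈ Finset.univ.erase i1, (2:ℕ) ≤ ∑ x ∈ Finset.univ.erase i1, fc x :=
      Finset.sum_le_sum (fun j hjmem => h2 j (Finset.mem_erase.mp hjmem).1)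
    have hconst : ∑ _x ∈ Finset.univ.erase i1, (2:ℕ) = (n - 1) * 2 := by
      rw [Finset.sum_const, Finset.card_erase_of_mem (Finset.mem_univ i1),
        Finset.card_univ, Fintype.card_fin, smul_eq_mul]
    have h1' := hone i1
    omega
  · push_neg at hbad
    have hbound : ∑ _x ∈ (Finset.univ : Finset (Fin n)), (2:ℕ) ≤ ∑ i, fc i :=
      Finset.sum_le_sum (fun j _ => hbad j)
    have hconst : ∑ _x ∈ (Finset.univ : Finset (Fin n)), (2:ℕ) = n * 2 := by
      rw [Finset.sum_const, Finset.card_univ, Fintype.card_fin, smul_eq_mul]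
    omega

end lower

end BqProof

/-- For a bouquet `B_n` of `n ≥ 2` circles of lengths `k i + 1` with
`k n ≥ … ≥ k 1 ≥ 2`, the metric dimension of its line graph is `2n - 1`. -/
theorem metricDim_lineGraph_bouquet (n : ℕ) (hn : 2 ≤ n) (k : Fin n → ℕ)
    (hk : ∀ i, 2 ≤ k i) (hmono : Monotone k) :
    metricDim (bouquet n k).lineGraph = 2 * n - 1 := by
  have φ : (BqProof.H hk) ≃g (bouquet n k).lineGraph :=
    { toEquiv := Equiv.ofBijective _ (BqProof.F_bijective hk), map_rel_iff' := Iff.rfl }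
  rw [← BqProof.metricDim_eq_of_iso φ]
  have hmem : (2 * n - 1) ∈
      {m | ∃ W : Set (BqProof.X n k), W.ncard = m ∧ IsResolvingSet (BqProof.H hk) W} :=
    ⟨BqProof.Wset hn hk, BqProof.ncard_Wset hn hk, BqProof.resolving_Wset hn hk⟩
  refine le_antisymm (Nat.sInf_le hmem) (le_csInf ⟨_, hmem⟩ ?_)
  rintro m ⟨W, rfl, hres⟩
  exact BqProof.lower_bound hk hn hres
end

section
/- For any connected graph G of order n ≥ 2 with at least one edge, the zero forcing number of its line graph satisfies Z(L(G)) ≥ Δ(G) − 1, where Δ(G) is the maximum degree of G. -/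
open SimpleGraph

variable {V : Type*}

private lemma zf_clique_bound {W : Type*} [Fintype W] (H : SimpleGraph W) (K : Set W)
    (hK : K.Pairwise H.Adj) (S : Set W) (hS : IsZeroForcingSet H S) :
    K.ncard ≤ S.ncard + 1 := by
  classical
  obtain ⟨m, hm⟩ := hS
  set B : ℕ → Set W := fun t => (zfStep H)^[t] S with hB
  have hBsucc : ∀ t, B (t + 1) = zfStep H (B t) := fun t => Function.iterate_succ_apply' _ _ _
  have hall : ∀ v : W, ∃ t, v ∈ B t := fun v => ⟨m, by simp [hB, hm]⟩
  set T : W → ℕ := fun v => Nat.find (hall v) with hT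
  have hTmem : ∀ v, v ∈ B (T v) := fun v => Nat.find_spec (hall v)
  have hTmin : ∀ v t, t < T v → v ∉ B t := fun v t ht => Nat.find_min (hall v) ht
  have hTle : ∀ v t, v ∈ B t → T v ≤ t := fun v t h => Nat.find_min' (hall v) h
  have hB0 : B 0 = S := rfl
  have hTpos : ∀ v, v ∉ S → 1 ≤ T v := by
    intro v hv
    rcases Nat.eq_zero_or_pos (T v) with h | h
    · exfalso; apply hv; have := hTmem v; rwa [h, hB0] at this
    · exact h
  have hforce : ∀ v : W, ∃ u : W, v ∉ S →
      u ∈ B (T v - 1) ∧ H.Adj u v ∧ ∀ w, H.Adj u w → w ∉ B (T v - 1) → w = v := by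
    intro v
    by_cases hv : v ∈ S
    · exact ⟨v, fun h => absurd hv h⟩
    · have h1 : 1 ≤ T v := hTpos v hv
      have hmem : v ∈ B (T v - 1 + 1) := by
        rw [Nat.sub_add_cancel h1]; exact hTmem v
      rw [hBsucc] at hmem
      have hnot : v ∉ B (T v - 1) := hTmin v _ (by omega)
      simp only [zfStep, Set.mem_union, Set.mem_setOf_eq] at hmem
      rcases hmem with h | ⟨u, hu, hadj, huniq⟩
      · exact absurd h hnot
      · exact ⟨u, fun _ => ⟨hu, hadj, huniq⟩⟩
  choose f0 hf0 using hforce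
  set f : W → W := fun v => if v ∈ S then v else f0 v with hf
  have hfS : ∀ v ∈ S, f v = v := fun v hv => if_pos hv
  have hfB : ∀ v, v ∉ S → f v ∈ B (T v - 1) := fun v hv => by
    simp only [hf, if_neg hv]; exact (hf0 v hv).1
  have hfadj : ∀ v, v ∉ S → H.Adj (f v) v := fun v hv => by
    simp only [hf, if_neg hv]; exact (hf0 v hv).2.1
  have hfuniq : ∀ v, v ∉ S → ∀ w, H.Adj (f v) w → w ∉ B (T v - 1) → w = v := fun v hv => by
    simp only [hf, if_neg hv]; exact (hf0 v hv).2.2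
  have hfT : ∀ v, v ∉ S → T (f v) < T v := fun v hv =>
    lt_of_le_of_lt (hTle _ _ (hfB v hv)) (by have := hTpos v hv; omega)
  have hinj : ∀ a b, f a = f b → a = b ∨ a ∈ S ∨ b ∈ S := by
    intro a b hab
    by_cases ha : a ∈ S
    · exact Or.inr (Or.inl ha)
    by_cases hb : b ∈ S
    · exact Or.inr (Or.inr hb)
    left
    rcases le_total (T a) (T b) with h | h
    · have hb' : b ∉ B (T a - 1) := hTmin b _ (by have := hTpos a ha; have := hTpos b hb; omega)
      have hadj : H.Adj (f a) b := by rw [hab]; exact hfadj b hb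
      exact (hfuniq a ha b hadj hb').symm
    · have ha' : a ∉ B (T b - 1) := hTmin a _ (by have := hTpos a ha; have := hTpos b hb; omega)
      have hadj : H.Adj (f b) a := by rw [← hab]; exact hfadj a ha
      exact hfuniq b hb a hadj ha'
  have hconst : ∀ n v, v ∈ S → f^[n] v = v := by
    intro n
    induction n with
    | zero => intro v _; simp
    | succ n ih => intro v hv; rw [Function.iterate_succ_apply, hfS v hv]; exact ih v hv
  have hreach : ∀ n v, T v ≤ n → f^[n] v ∈ S := by
    intro n
    induction n with
    | zero =>
      intro v hv
      have h0 : T v = 0 := Nat.le_zero.mp hv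
      have := hTmem v; rw [h0, hB0] at this; simpa using this
    | succ n ih =>
      intro v hv
      by_cases hvS : v ∈ S
      · rw [hconst (n + 1) v hvS]; exact hvS
      · rw [Function.iterate_succ_apply]
        exact ih (f v) (by have := hfT v hvS; omega)
  have hfirst : ∀ j a x, f x = x → f^[j] a = x →
      a = x ∨ ∃ i, f^[i] a ≠ x ∧ f (f^[i] a) = x := by
    intro j
    induction j with
    | zero => intro a x _ h; exact Or.inl h
    | succ j ih =>
      intro a x hx h
      rw [Function.iterate_succ_apply'] at h
      by_cases hy : f^[j] a = x
      · exact ih a x hx hy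
      · exact Or.inr ⟨j, hy, h⟩
  have hH1 : ∀ a b j, f (f^[j] a) = f b → (∃ i, f^[i] a = b) ∨ (∃ i, f^[i] b = a) := by
    intro a b j h
    rcases hinj _ _ h with heq | hyS | hbS
    · exact Or.inl ⟨j, heq⟩
    · have hxfix : f (f^[j] a) = f^[j] a := hfS _ hyS
      have hfb : f b = f^[j] a := by rw [← h, hxfix]
      by_cases hbS' : b ∈ S
      · exact Or.inl ⟨j, by rw [← hfb, hfS b hbS']⟩
      · rcases hfirst j a (f^[j] a) hxfix rfl with hax | ⟨i, hne, hfi⟩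
        · refine Or.inr ⟨1, ?_⟩
          simp only [Function.iterate_one]
          rw [hfb, ← hax]
        · have : f (f^[i] a) = f b := by rw [hfi, hfb]
          rcases hinj _ _ this with heq | hS1 | hS2
          · exact Or.inl ⟨i, heq⟩
          · exact absurd (hfS _ hS1 ▸ hfi) hne
          · exact absurd hS2 hbS'
    · refine Or.inl ⟨j + 1, ?_⟩
      rw [Function.iterate_succ_apply', h, hfS b hbS]
  have hanc : ∀ n a b, f^[n] a = f^[n] b → (∃ j, f^[j] a = b) ∨ (∃ j, f^[j] b = a) := by
    intro n
    induction n with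
    | zero => intro a b h; exact Or.inl ⟨0, h⟩
    | succ n ih =>
      intro a b h
      rw [Function.iterate_succ_apply, Function.iterate_succ_apply] at h
      rcases ih (f a) (f b) h with ⟨j, hj⟩ | ⟨j, hj⟩
      · rw [← Function.iterate_succ_apply, Function.iterate_succ_apply'] at hj
        exact hH1 a b j hj
      · rw [← Function.iterate_succ_apply, Function.iterate_succ_apply'] at hj
        exact (hH1 b a j hj).symm
  set D : Set W := {w | w ∈ K ∧ w ∉ S ∧ f w ∈ K} with hD
  have hDle : ∀ w1 ∈ D, ∀ w2 ∈ D, T w1 ≤ T w2 → w2 = w1 := by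
    rintro w1 ⟨hK1, hS1, hf1⟩ w2 ⟨hK2, hS2, _⟩ hle
    have h1 : 1 ≤ T w1 := hTpos w1 hS1
    have hxw : f w1 ≠ w2 := by
      intro h
      exact hTmin w2 (T w1 - 1) (by omega) (h ▸ hfB w1 hS1)
    have hadj : H.Adj (f w1) w2 := hK hf1 hK2 hxw
    exact hfuniq w1 hS1 w2 hadj (hTmin w2 _ (by omega))
  have hDsub : D.Subsingleton := by
    intro a ha b hb
    rcases le_total (T a) (T b) with h | h
    · exact (hDle a ha b hb h).symm
    · exact hDle b hb a ha h
  have hCC : ∀ w1 ∈ K, ∀ w2 ∈ K, w1 ≠ w2 → (∃ j, f^[j] w1 = w2) → w1 ∈ D := by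
    intro w1 hK1 w2 hK2 hne hex
    have hj := Nat.find_spec hex
    set j := Nat.find hex with hjdef
    have hjpos : j ≠ 0 := by
      intro h; rw [h] at hj; exact hne (by simpa using hj)
    have hmid : ∀ i < j, f^[i] w1 ∉ S := by
      intro i hi hiS
      have h1 : f^[j] w1 = f^[i] w1 := by
        have h2 : f^[j] w1 = f^[j - i] (f^[i] w1) := by
          rw [← Function.iterate_add_apply]; congr 1; omega
        rw [h2, hconst _ _ hiS]
      exact (Nat.find_min hex hi) (by rw [← h1]; exact hj)
    have hw1S : w1 ∉ S := by
      have := hmid 0 (by omega); simpa using this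
    have hTdec : ∀ i, i ≤ j - 1 → T (f^[i] w1) + i ≤ T w1 := by
      intro i
      induction i with
      | zero => intro _; simp
      | succ i ih =>
        intro hi
        have h1 := ih (by omega)
        have h2 : T (f^[i + 1] w1) < T (f^[i] w1) := by
          rw [Function.iterate_succ_apply']
          exact hfT _ (hmid i (by omega))
        omega
    by_cases hj1 : j = 1
    · refine ⟨hK1, hw1S, ?_⟩
      have h1 : f w1 = w2 := by
        have := hj; rw [hj1] at this; simpa using this
      rw [h1]; exact hK2
    · exfalso
      set z := f^[j - 1] w1 with hz
      have hzS : z ∉ S := hmid (j - 1) (by omega)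
      have hfz : f z = w2 := by
        have h1 : f (f^[j - 1] w1) = f^[j - 1 + 1] w1 :=
          (Function.iterate_succ_apply' f (j - 1) w1).symm
        rw [hz, h1, show j - 1 + 1 = j by omega]; exact hj
      have hTz : T z + (j - 1) ≤ T w1 := hTdec (j - 1) le_rfl
      have hzw1 : w1 ≠ z := by
        intro h
        rw [← h] at hTz; omega
      have hadj : H.Adj (f z) w1 := by rw [hfz]; exact hK hK2 hK1 (Ne.symm hne)
      have hw1B : w1 ∉ B (T z - 1) := hTmin w1 _ (by omega)
      exact hzw1 (hfuniq z hzS w1 hadj hw1B)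
  have hTm : ∀ v, T v ≤ m := fun v => hTle v m (by simp [hB, hm])
  have hmapS : ∀ w, f^[m] w ∈ S := fun w => hreach m w (hTm w)
  have hinjOn : Set.InjOn (f^[m]) (K \ D) := by
    intro a ha b hb hab
    by_contra hne
    rcases hanc m a b hab with hex | hex
    · exact ha.2 (hCC a ha.1 b hb.1 hne hex)
    · exact hb.2 (hCC b hb.1 a ha.1 (Ne.symm hne) hex)
  have h1 : (K \ D).ncard ≤ S.ncard := by
    rw [← Set.ncard_image_of_injOn hinjOn]
    exact Set.ncard_le_ncard (by rintro x ⟨y, _, rfl⟩; exact hmapS y) (Set.toFinite S)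
  have h2 : (K ∩ D).ncard ≤ 1 := by
    rw [Set.ncard_le_one (Set.toFinite _)]
    intro a ha b hb
    exact hDsub ha.2 hb.2
  have h3 : (K ∩ D).ncard + (K \ D).ncard = K.ncard :=
    Set.ncard_inter_add_ncard_diff_eq_ncard K D (Set.toFinite K)
  omega

/-- For any connected graph `G` of order `n ≥ 2` with at least one edge,
`Z(L(G)) ≥ Δ(G) - 1`. -/
theorem maxDegree_sub_one_le_zeroForcingNum_lineGraph {V : Type*} [Fintype V]
    [DecidableEq V] (G : SimpleGraph V) [DecidableRel G.Adj]
    (hn : 2 ≤ Fintype.card V) (hconn : G.Connected) (hE : G.edgeSet.Nonempty) :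
    G.maxDegree - 1 ≤ zeroForcingNum G.lineGraph := by
  classical
  have hNV : Nonempty V := Fintype.card_pos_iff.mp (by omega)
  obtain ⟨v, hv⟩ := G.exists_maximal_degree_vertex
  set K : Set G.edgeSet := {e | v ∈ (e : Sym2 V)} with hKdef
  have hKadj : K.Pairwise G.lineGraph.Adj := by
    intro e₁ he₁ e₂ he₂ hne'
    rw [SimpleGraph.lineGraph_adj_iff_exists]
    exact ⟨hne', v, he₁, he₂⟩
  have himg : Subtype.val '' K = G.incidenceSet v := by
    ext e
    constructor
    · rintro ⟨⟨e, he⟩, hv', rfl⟩; exact ⟨he, hv'⟩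
    · rintro ⟨he, hv'⟩; exact ⟨⟨e, he⟩, hv', rfl⟩
  have hKcard : K.ncard = G.degree v := by
    rw [← Set.ncard_image_of_injOn (Set.injOn_of_injective Subtype.val_injective), himg,
      Set.ncard_eq_toFinset_card']
    simpa [SimpleGraph.incidenceFinset] using G.card_incidenceFinset_eq_degree v
  have hsetne : {k | ∃ S : Set G.edgeSet, S.ncard = k ∧ IsZeroForcingSet G.lineGraph S}.Nonempty :=
    ⟨(Set.univ : Set G.edgeSet).ncard, Set.univ, rfl, 0, rfl⟩
  obtain ⟨S, hScard, hSzf⟩ := Nat.sInf_mem hsetne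
  have hb := zf_clique_bound G.lineGraph K hKadj S hSzf
  rw [hKcard, hScard] at hb
  rw [zeroForcingNum, hv]
  omega
end

section
/- For any connected graph G of order n ≥ 2, the zero forcing number of its line graph satisfies Z(L(G)) ≤ |E(G)| − (δ(G) − 1), where δ(G) is the minimum degree of G and |E(G)| is the number of edges of G. -/
open SimpleGraph

variable {V : Type*}

lemma zfStep_subset (G : SimpleGraph V) (S : Set V) : S ⊆ zfStep G S :=
  Set.subset_union_left

lemma zfStep_mono (G : SimpleGraph V) {S T : Set V} (h : S ⊆ T) :
    zfStep G S ⊆ zfStep G T := by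
  rintro x hx
  rcases hx with hx | ⟨u, hu, hadj, huniq⟩
  · exact Or.inl (h hx)
  · exact Or.inr ⟨u, h hu, hadj, fun w hw hwT => huniq w hw fun hS => hwT (h hS)⟩

/-- For any connected graph `G` of order `n ≥ 2`, `Z(L(G)) ≤ |E(G)| - (δ(G) - 1)`. -/
theorem zeroForcingNum_lineGraph_le {V : Type*} [Fintype V] [DecidableEq V]
    (G : SimpleGraph V) [DecidableRel G.Adj]
    (hn : 2 ≤ Fintype.card V) (hconn : G.Connected) :
    zeroForcingNum G.lineGraph ≤ G.edgeSet.ncard - (G.minDegree - 1) := by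
  classical
  set d := G.minDegree with hd
  by_cases hd2 : d ≤ 1
  · have h1 : d - 1 = 0 := by omega
    rw [h1, Nat.sub_zero]
    apply Nat.sInf_le
    refine ⟨Set.univ, ?_, 0, rfl⟩
    rw [Set.ncard_univ, Nat.card_coe_set_eq]
  push_neg at hd2
  haveI : Nonempty V := Fintype.card_pos_iff.mp (by omega)
  obtain ⟨v, hv⟩ := G.exists_minimal_degree_vertex
  have hcard : (G.neighborFinset v).card = d := by
    rw [G.card_neighborFinset_eq_degree, ← hv]
  let u : Fin d → V := fun i => ((G.neighborFinset v).equivFin.symm (Fin.cast hcard.symm i) : V)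
  have hu_mem : ∀ i, u i ∈ G.neighborFinset v := fun i => Subtype.coe_prop _
  have hu_adj : ∀ i, G.Adj v (u i) := fun i => (G.mem_neighborFinset _ _).mp (hu_mem i)
  have hu_inj : Function.Injective u := by
    intro i j hij
    have := (G.neighborFinset v).equivFin.symm.injective (Subtype.ext hij)
    exact Fin.cast_injective hcard.symm this
  let e : Fin d → G.edgeSet := fun i => ⟨s(v, u i), G.mem_edgeSet.mpr (hu_adj i)⟩
  have he_inj : Function.Injective e := by
    intro i j hij
    exact hu_inj (Sym2.congr_right.mp (Subtype.ext_iff.mp hij))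
  let Sset : ℕ → Set G.edgeSet := fun j => {x | ∀ i : Fin d, j ≤ (i : ℕ) → e i ≠ x}
  -- key forcing step
  have hstep : ∀ j : ℕ, 1 ≤ j → Sset (j + 1) ⊆ zfStep G.lineGraph (Sset j) := by
    intro j hj x hx
    by_cases hjd : j < d
    swap
    · refine zfStep_subset _ _ ?_
      intro i hi
      exact absurd (lt_of_le_of_lt hi i.isLt) hjd
    by_cases hxe : x = e ⟨j, hjd⟩
    swap
    · refine zfStep_subset _ _ ?_
      intro i hi hei
      rcases Nat.lt_or_ge (j : ℕ) (i : ℕ) with h' | h'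
      · exact hx i h' hei
      · have : i = ⟨j, hjd⟩ := Fin.ext (le_antisymm h' hi)
        exact hxe (by rw [← hei, this])
    subst hxe
    -- find the forcing edge f
    set jF : Fin d := ⟨j, hjd⟩ with hjF
    have hdeg : d ≤ G.degree (u jF) := G.minDegree_le_degree _
    set bad : Finset V :=
      insert v ((Finset.univ.filter fun i : Fin d => j < (i : ℕ)).image u) with hbad
    have hfiltcard : (Finset.univ.filter fun i : Fin d => j < (i : ℕ)).card ≤ d - (j + 1) := by
      have := Finset.card_le_card_of_injOn (s := Finset.univ.filter fun i : Fin d => j < (i : ℕ)) (t := Finset.Ico (j + 1) d) (fun i : Fin d => (i : ℕ))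
        (fun i hi => Finset.mem_Ico.mpr ⟨(Finset.mem_filter.mp hi).2, i.isLt⟩)
        (Fin.val_injective.injOn)
      simpa [Nat.card_Ico] using this
    have hbadcard : bad.card ≤ d - 1 := by
      calc bad.card ≤ ((Finset.univ.filter fun i : Fin d => j < (i : ℕ)).image u).card + 1 :=
            Finset.card_insert_le _ _
        _ ≤ (Finset.univ.filter fun i : Fin d => j < (i : ℕ)).card + 1 :=
            Nat.add_le_add_right (Finset.card_image_le) 1
        _ ≤ d - (j + 1) + 1 := Nat.add_le_add_right hfiltcard 1
        _ ≤ d - 1 := by omega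
    have hexw : ∃ w ∈ G.neighborFinset (u jF), w ∉ bad := by
      by_contra hcon
      push_neg at hcon
      have hsub : G.neighborFinset (u jF) ⊆ bad := fun w hw => hcon w hw
      have := Finset.card_le_card hsub
      rw [G.card_neighborFinset_eq_degree] at this
      omega
    obtain ⟨w, hw_mem, hw_bad⟩ := hexw
    have hw_adj : G.Adj (u jF) w := (G.mem_neighborFinset _ _).mp hw_mem
    have hw_v : w ≠ v := fun h => hw_bad (h ▸ Finset.mem_insert_self v _)
    have hw_u : ∀ i : Fin d, j < (i : ℕ) → w ≠ u i := by
      intro i hi h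
      exact hw_bad (Finset.mem_insert_of_mem (Finset.mem_image.mpr
        ⟨i, Finset.mem_filter.mpr ⟨Finset.mem_univ _, hi⟩, h.symm⟩))
    have huv : ∀ i : Fin d, u i ≠ v := fun i h => (G.irrefl (h ▸ hu_adj i)).elim
    let f : G.edgeSet := ⟨s(u jF, w), G.mem_edgeSet.mpr hw_adj⟩
    have hf_ne : ∀ i : Fin d, e i ≠ f := by
      intro i h
      have h' : s(v, u i) = s(u jF, w) := Subtype.ext_iff.mp h
      rcases Sym2.eq_iff.mp h' with ⟨h1, _⟩ | ⟨h1, _⟩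
      · exact huv jF h1.symm
      · exact hw_v h1.symm
    have hf_S : f ∈ Sset j := fun i _ h => hf_ne i h
    refine Or.inr ⟨f, hf_S, ?_, ?_⟩
    · refine lineGraph_adj_iff_exists.mpr ⟨fun h => hf_ne jF h.symm, u jF, ?_, ?_⟩
      · exact Sym2.mem_iff.mpr (Or.inl rfl)
      · exact Sym2.mem_iff.mpr (Or.inr rfl)
    · intro g hadj hgS
      have hgS' : ¬ ∀ i : Fin d, j ≤ (i : ℕ) → e i ≠ g := hgS
      push_neg at hgS'
      obtain ⟨i, hi, hgi⟩ := hgS'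
      obtain ⟨x, hxf, hxg⟩ := (lineGraph_adj_iff_exists.mp hadj).2
      rw [← hgi] at hxg
      have hxf' : x = u jF ∨ x = w := Sym2.mem_iff.mp hxf
      have hxg' : x = v ∨ x = u i := Sym2.mem_iff.mp hxg
      have : i = jF := by
        rcases hxf' with h1 | h1 <;> rcases hxg' with h2 | h2
        · exact absurd (h1 ▸ h2) (huv jF)
        · exact (hu_inj (h1 ▸ h2 ▸ rfl : u i = u jF))
        · exact absurd (h1 ▸ h2) hw_v
        · rcases Nat.lt_or_ge (j : ℕ) (i : ℕ) with h' | h'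
          · exact absurd (h1 ▸ h2 : w = u i) (hw_u i h')
          · exact Fin.ext (le_antisymm h' hi)
      rw [← hgi, this]
  -- iterate
  have hiter : ∀ m : ℕ, Sset (1 + m) ⊆ (zfStep G.lineGraph)^[m] (Sset 1) := by
    intro m
    induction m with
    | zero => exact subset_rfl
    | succ m ih =>
      rw [Function.iterate_succ_apply']
      calc Sset (1 + (m + 1)) = Sset ((1 + m) + 1) := by ring_nf
        _ ⊆ zfStep G.lineGraph (Sset (1 + m)) := hstep (1 + m) (by omega)
        _ ⊆ zfStep G.lineGraph ((zfStep G.lineGraph)^[m] (Sset 1)) := zfStep_mono _ ih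
  have hSd : Sset d = Set.univ := by
    refine Set.eq_univ_of_forall fun x => ?_
    intro i hi
    exact absurd (lt_of_le_of_lt hi i.isLt) (lt_irrefl d)
  have hZF : IsZeroForcingSet G.lineGraph (Sset 1) := by
    refine ⟨d - 1, Set.eq_univ_of_univ_subset ?_⟩
    rw [← hSd]
    have h3 : d = 1 + (d - 1) := by omega
    conv_lhs => rw [h3]
    exact hiter (d - 1)
  -- cardinality
  have hSeq : Sset 1 = Set.univ \ (e '' {i : Fin d | 1 ≤ (i : ℕ)}) := by
    ext x
    simp only [Sset, Set.mem_setOf_eq, Set.mem_diff, Set.mem_univ, true_and, Set.mem_image,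
      Set.mem_setOf_eq]
    constructor
    · rintro h ⟨i, hi, hix⟩; exact h i hi hix
    · intro h i hi hix; exact h ⟨i, hi, hix⟩
  have hcardS : (Sset 1).ncard = G.edgeSet.ncard - (d - 1) := by
    rw [hSeq, Set.ncard_diff (Set.subset_univ _), Set.ncard_univ,
      Nat.card_coe_set_eq, Set.ncard_image_of_injective _ he_inj]
    congr 1
    have hset : {i : Fin d | 1 ≤ (i : ℕ)} = Set.univ \ {(⟨0, by omega⟩ : Fin d)} := by
      ext i
      simp only [Set.mem_setOf_eq, Set.mem_diff, Set.mem_univ, true_and, Set.mem_singleton_iff]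
      constructor
      · intro h h0; rw [h0] at h; simp at h
      · intro h
        rcases Nat.eq_zero_or_pos (i : ℕ) with h0 | h0
        · exact absurd (Fin.ext h0) h
        · exact h0
    rw [hset, Set.ncard_diff_singleton_of_mem (Set.mem_univ _), Set.ncard_univ,
      Nat.card_eq_fintype_card, Fintype.card_fin]
  rw [← hcardS]
  exact Nat.sInf_le ⟨Sset 1, rfl, hZF⟩
end

section
/- For any connected graph G of order at least 2, the zero forcing number of G is at most twice the zero forcing number of its line graph: Z(G) ≤ 2·Z(L(G)). -/
open SimpleGraph

variable {V : Type*}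

private lemma sym2_ncard_le {V : Type*} [Fintype V] (z : Sym2 V) :
    ({x | x ∈ z}).ncard ≤ 2 := by
  induction z using Sym2.ind with
  | _ p q =>
    have h : {x | x ∈ s(p, q)} = {p, q} := by ext x; simp
    rw [h]
    exact (Set.ncard_insert_le p {q}).trans (by simp)

private lemma endpoints_ncard_le {V : Type*} [Fintype V] (G : SimpleGraph V)
    (S : Set G.edgeSet) :
    ({x | ∃ f ∈ S, x ∈ (f : Sym2 V)}).ncard ≤ 2 * S.ncard := by
  refine Set.Finite.induction_on (s := S)
    (motive := fun (s : Set G.edgeSet) _ => ({x | ∃ f ∈ s, x ∈ (f : Sym2 V)}).ncard ≤ 2 * s.ncard)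
    (Set.toFinite S) (by simp) ?_
  intro a s has hs ih
  have heq : {x | ∃ f ∈ insert a s, x ∈ (f : Sym2 V)} =
      {x | x ∈ (a : Sym2 V)} ∪ {x | ∃ f ∈ s, x ∈ (f : Sym2 V)} := by
    ext x
    simp only [Set.mem_insert_iff, Set.mem_union, Set.mem_setOf_eq]
    constructor
    · rintro ⟨f, (rfl | hf), hx⟩
      · exact Or.inl hx
      · exact Or.inr ⟨f, hf, hx⟩
    · rintro (hx | ⟨f, hf, hx⟩)
      · exact ⟨a, Or.inl rfl, hx⟩
      · exact ⟨f, Or.inr hf, hx⟩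
  rw [heq, Set.ncard_insert_of_notMem has (Set.toFinite s)]
  have h1 := Set.ncard_union_le {x | x ∈ (a : Sym2 V)} {x | ∃ f ∈ s, x ∈ (f : Sym2 V)}
  have h2 := sym2_ncard_le (V := V) (a : Sym2 V)
  omega

private lemma endpoints_zfStep_iterate {V : Type*} (G : SimpleGraph V) (S : Set G.edgeSet) :
    ∀ (m : ℕ) (e : G.edgeSet), e ∈ (zfStep G.lineGraph)^[m] S → ∀ v : V, v ∈ (e : Sym2 V) →
      v ∈ (zfStep G)^[m] {x | ∃ f ∈ S, x ∈ (f : Sym2 V)} := by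
  intro m
  induction m with
  | zero => intro e he v hv; exact ⟨e, he, hv⟩
  | succ m ih =>
    intro e he v hv
    rw [Function.iterate_succ_apply'] at he ⊢
    simp only [zfStep, Set.mem_union, Set.mem_setOf_eq] at he ⊢
    rcases he with he | ⟨g, hg, hadj, hforce⟩
    · exact Or.inl (ih e he v hv)
    · rw [lineGraph_adj_iff_exists] at hadj
      obtain ⟨hne, x, hxg, hxe⟩ := hadj
      by_cases hvg : v ∈ (g : Sym2 V)
      · exact Or.inl (ih g hg v hvg)
      · have hxv : x ≠ v := fun h => hvg (h ▸ hxg)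
        have hesy : (e : Sym2 V) = s(x, v) := (Sym2.mem_and_mem_iff hxv).mp ⟨hxe, hv⟩
        have hadjxv : G.Adj x v := by
          have hp := e.prop
          rw [hesy] at hp
          exact G.mem_edgeSet.mp hp
        refine Or.inr ⟨x, ih g hg x hxg, hadjxv, ?_⟩
        intro w hw hwT
        by_contra hwv
        apply hwT
        have hf : s(x, w) ∈ G.edgeSet := G.mem_edgeSet.mpr hw
        have hwf : w ∈ ((⟨s(x, w), hf⟩ : G.edgeSet) : Sym2 V) := Sym2.mem_mk_right x w
        by_cases hfg : (⟨s(x, w), hf⟩ : G.edgeSet) = g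
        · exact ih g hg w (hfg ▸ hwf)
        · have hadjgf : G.lineGraph.Adj g ⟨s(x, w), hf⟩ := by
            rw [lineGraph_adj_iff_exists]
            exact ⟨Ne.symm hfg, x, hxg, Sym2.mem_mk_left x w⟩
          by_cases hfB : (⟨s(x, w), hf⟩ : G.edgeSet) ∈ (zfStep G.lineGraph)^[m] S
          · exact ih _ hfB w hwf
          · exfalso
            have hfe := hforce _ hadjgf hfB
            have hcoe : ((⟨s(x, w), hf⟩ : G.edgeSet) : Sym2 V) = s(x, v) := by
              rw [hfe, hesy]
            have hwmem : w ∈ s(x, v) := hcoe ▸ hwf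
            rcases Sym2.mem_iff.mp hwmem with h | h
            · exact absurd h.symm hw.ne
            · exact hwv h

/-- For any connected graph `G` of order at least 2, `Z(G) ≤ 2 Z(L(G))`. -/
theorem zeroForcingNum_le_two_mul_zeroForcingNum_lineGraph {V : Type*} [Fintype V]
    (G : SimpleGraph V) (hn : 2 ≤ Fintype.card V) (hconn : G.Connected) :
    zeroForcingNum G ≤ 2 * zeroForcingNum G.lineGraph := by
  classical
  have hadjall : ∀ v : V, ∃ u, G.Adj v u := by
    intro v
    obtain ⟨w, hw⟩ := Fintype.exists_ne_of_one_lt_card (by omega) v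
    obtain ⟨p⟩ := hconn.preconnected v w
    cases p with
    | nil => exact absurd rfl hw
    | cons h _ => exact ⟨_, h⟩
  have hmem : zeroForcingNum G.lineGraph ∈
      {k | ∃ S : Set G.edgeSet, S.ncard = k ∧ IsZeroForcingSet G.lineGraph S} :=
    Nat.sInf_mem ⟨(Set.univ : Set G.edgeSet).ncard, Set.univ, rfl, 0, by simp⟩
  obtain ⟨S, hScard, M, hM⟩ := hmem
  have hTzf : IsZeroForcingSet G {x | ∃ f ∈ S, x ∈ (f : Sym2 V)} := by
    refine ⟨M, ?_⟩
    rw [Set.eq_univ_iff_forall]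
    intro v
    obtain ⟨u, hu⟩ := hadjall v
    have he : (⟨s(v, u), G.mem_edgeSet.mpr hu⟩ : G.edgeSet) ∈ (zfStep G.lineGraph)^[M] S := by
      rw [hM]; trivial
    exact endpoints_zfStep_iterate G S M _ he v (Sym2.mem_mk_left v u)
  have h1 : zeroForcingNum G ≤ ({x | ∃ f ∈ S, x ∈ (f : Sym2 V)}).ncard :=
    Nat.sInf_le ⟨_, rfl, hTzf⟩
  have h2 := endpoints_ncard_le G S
  omega
end

section
/- For any tree T of order at least 2, the zero forcing number of T is at most the zero forcing number of its line graph: Z(T) ≤ Z(L(T)). -/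
open SimpleGraph

variable {V : Type*}

section ZFHelpers

lemma zfStep_iterate_mono (G : SimpleGraph V) (S : Set V) {s t : ℕ} (h : s ≤ t) :
    (zfStep G)^[s] S ⊆ (zfStep G)^[t] S := by
  induction h with
  | refl => exact subset_rfl
  | step _ ih =>
      rename_i t' _
      refine ih.trans ?_
      rw [Function.iterate_succ_apply']
      exact zfStep_subset G _

-- every path in a tree realizes the distance
lemma SimpleGraph.IsTree.length_eq_dist {T : SimpleGraph V} (hT : T.IsTree) {u v : V}
    (p : T.Walk u v) (hp : p.IsPath) : p.length = T.dist u v := by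
  obtain ⟨q, hq, hql⟩ := hT.isConnected.exists_path_of_dist u v
  have := hT.IsAcyclic.path_unique ⟨p, hp⟩ ⟨q, hq⟩
  rw [← hql]
  exact congrArg Walk.length (congrArg Subtype.val this)

-- vertices on a walk are within distance of the length
lemma dist_le_length_of_mem_support {G : SimpleGraph V} {x u y : V}
    (p : G.Walk x u) (hy : y ∈ p.support) : G.dist x y ≤ p.length := by
  classical
  calc G.dist x y ≤ (p.takeUntil y hy).length := SimpleGraph.dist_le _
  _ ≤ p.length := Walk.length_takeUntil_le p hy

-- adjacent vertices: distance to a root differs by one (trees)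
lemma SimpleGraph.IsTree.adj_dist_dichotomy {T : SimpleGraph V} (hT : T.IsTree) (x : V) {c w : V}
    (h : T.Adj c w) :
    T.dist x w = T.dist x c + 1 ∨ T.dist x c = T.dist x w + 1 := by
  classical
  obtain ⟨p, hp, hpl⟩ := hT.isConnected.exists_path_of_dist x c
  by_cases hw : w ∈ p.support
  · right
    have hts := Walk.take_spec p hw
    have h1 : (p.takeUntil w hw).length = T.dist x w :=
      hT.length_eq_dist _ (hp.takeUntil hw)
    have h2 : (p.dropUntil w hw).length = T.dist w c :=
      hT.length_eq_dist _ (hp.dropUntil hw)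
    have h3 : T.dist w c = 1 := by
      rw [SimpleGraph.dist_eq_one_iff_adj]
      exact h.symm
    have h4 : (p.takeUntil w hw).length + (p.dropUntil w hw).length = p.length := by
      rw [← Walk.length_append, hts]
    omega
  · left
    have hcp : (p.concat h).IsPath := by
      rw [Walk.isPath_def, Walk.support_concat]
      rw [List.nodup_append]
      refine ⟨hp.support_nodup, List.nodup_singleton _, ?_⟩
      intro a ha b hb heq
      simp only [List.mem_singleton] at hb
      rw [heq, hb] at ha
      exact hw ha
    have := hT.length_eq_dist _ hcp
    rw [Walk.length_concat, hpl] at this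
    omega

-- uniqueness of parent in a tree
lemma SimpleGraph.IsTree.parent_unique {T : SimpleGraph V} (hT : T.IsTree) (x : V) {c u₁ u₂ : V}
    (h1 : T.Adj u₁ c) (h2 : T.Adj u₂ c)
    (hd1 : T.dist x c = T.dist x u₁ + 1) (hd2 : T.dist x c = T.dist x u₂ + 1) :
    u₁ = u₂ := by
  classical
  obtain ⟨p₁, hp₁, hl₁⟩ := hT.isConnected.exists_path_of_dist x u₁
  obtain ⟨p₂, hp₂, hl₂⟩ := hT.isConnected.exists_path_of_dist x u₂
  have hc₁ : c ∉ p₁.support := by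
    intro hc
    have := dist_le_length_of_mem_support p₁ hc
    omega
  have hc₂ : c ∉ p₂.support := by
    intro hc
    have := dist_le_length_of_mem_support p₂ hc
    omega
  have hq₁ : (p₁.concat h1).IsPath := by
    rw [Walk.isPath_def, Walk.support_concat, List.nodup_append]
    refine ⟨hp₁.support_nodup, List.nodup_singleton _, ?_⟩
    intro a ha b hb heq
    simp only [List.mem_singleton] at hb
    rw [heq, hb] at ha
    exact hc₁ ha
  have hq₂ : (p₂.concat h2).IsPath := by
    rw [Walk.isPath_def, Walk.support_concat, List.nodup_append]
    refine ⟨hp₂.support_nodup, List.nodup_singleton _, ?_⟩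
    intro a ha b hb heq
    simp only [List.mem_singleton] at hb
    rw [heq, hb] at ha
    exact hc₂ ha
  have hQ := hT.IsAcyclic.path_unique ⟨p₁.concat h1, hq₁⟩ ⟨p₂.concat h2, hq₂⟩
  have hQ' : (p₁.concat h1) = (p₂.concat h2) := congrArg Subtype.val hQ
  have hrev : (p₁.concat h1).reverse = (p₂.concat h2).reverse := by rw [hQ']
  rw [Walk.reverse_concat, Walk.reverse_concat] at hrev
  have := congrArg (fun q => q.getVert 1) hrev
  simpa [Walk.getVert_cons_succ, Walk.getVert_zero] using this

-- a neighbor along a geodesic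
lemma exists_adj_dist {G : SimpleGraph V} {v w : V} {k : ℕ}
    (hconn : G.Connected) (h : G.dist v w = k + 1) :
    ∃ c, G.Adj v c ∧ G.dist c w = k := by
  obtain ⟨p, hpl⟩ := hconn.exists_walk_length_eq_dist v w
  cases p with
  | nil => simp [SimpleGraph.dist_self] at h
  | cons hadj q =>
      rename_i c
      refine ⟨c, hadj, ?_⟩
      have h1 : G.dist c w ≤ q.length := SimpleGraph.dist_le q
      have h2 : G.dist v w ≤ G.dist v c + G.dist c w := hconn.dist_triangle
      have h3 : G.dist v c = 1 := SimpleGraph.dist_eq_one_iff_adj.mpr hadj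
      simp only [Walk.length_cons] at hpl
      omega

-- every vertex of a connected graph on ≥ 2 vertices has a neighbor
lemma exists_adj_of_two_le_card [Fintype V] {G : SimpleGraph V} (hconn : G.Connected)
    (hn : 2 ≤ Fintype.card V) (v : V) : ∃ c, G.Adj v c := by
  obtain ⟨y, hy⟩ := Fintype.exists_ne_of_one_lt_card (by omega) v
  have hd : G.dist v y ≠ 0 := by
    have := hconn.pos_dist_of_ne (Ne.symm hy)
    omega
  obtain ⟨k, hk⟩ : ∃ k, G.dist v y = k + 1 := ⟨G.dist v y - 1, by omega⟩
  obtain ⟨c, hc, _⟩ := exists_adj_dist hconn hk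
  exact ⟨c, hc⟩

lemma leaves_minus_one_forcing [Fintype V] {T : SimpleGraph V} (hT : T.IsTree)
    (hn : 2 ≤ Fintype.card V) (x : V) :
    IsZeroForcingSet T ({v | (T.neighborSet v).ncard = 1} \ {x}) := by
  classical
  have hconn := hT.isConnected
  set B : Set V := {v | (T.neighborSet v).ncard = 1} \ {x} with hB
  set D : V → Set V := fun v => {w | T.dist x w = T.dist x v + T.dist v w} with hD
  have hDself : ∀ v, v ∈ D v := by
    intro v
    simp [hD, SimpleGraph.dist_self]
  have himfin : ∀ v, ((fun w => T.dist v w) '' D v).Finite := fun v => Set.toFinite _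
  have himne : ∀ v, ((fun w => T.dist v w) '' D v).Nonempty :=
    fun v => ⟨T.dist v v, v, hDself v, rfl⟩
  set H : V → ℕ := fun v => sSup ((fun w => T.dist v w) '' D v) with hH
  have hle : ∀ v w, w ∈ D v → T.dist v w ≤ H v := by
    intro v w hw
    exact le_csSup (himfin v).bddAbove ⟨w, hw, rfl⟩
  have hHle : ∀ v N, (∀ w ∈ D v, T.dist v w ≤ N) → H v ≤ N := by
    intro v N h
    exact csSup_le (himne v) (by rintro k ⟨w, hw, rfl⟩; exact h w hw)
  have hHmem : ∀ v, ∃ w ∈ D v, T.dist v w = H v := by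
    intro v
    have := Nat.sSup_mem (himne v) (himfin v).bddAbove
    obtain ⟨w, hw, hweq⟩ := this
    exact ⟨w, hw, hweq⟩
  have htrans : ∀ u v w, v ∈ D u → w ∈ D v →
      w ∈ D u ∧ T.dist u w = T.dist u v + T.dist v w := by
    intro u v w huv hvw
    simp only [hD, Set.mem_setOf_eq] at huv hvw ⊢
    have t1 : T.dist x w ≤ T.dist x u + T.dist u w := hconn.dist_triangle
    have t2 : T.dist u w ≤ T.dist u v + T.dist v w := hconn.dist_triangle
    omega
  -- a non-leaf ≠ x has a child
  have hchild : ∀ v, v ≠ x → (T.neighborSet v).ncard ≠ 1 →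
      ∃ c, T.Adj v c ∧ T.dist x c = T.dist x v + 1 := by
    intro v hvx hnl
    obtain ⟨c₀, hc₀⟩ := exists_adj_of_two_le_card hconn hn v
    have hpos : 0 < (T.neighborSet v).ncard := by
      rw [Set.ncard_pos (Set.toFinite _)]
      exact ⟨c₀, hc₀⟩
    have h2 : 1 < (T.neighborSet v).ncard := by omega
    rw [Set.one_lt_ncard (Set.toFinite _)] at h2
    obtain ⟨c₁, hc₁, c₂, hc₂, hcc⟩ := h2
    rw [SimpleGraph.mem_neighborSet] at hc₁ hc₂
    rcases hT.adj_dist_dichotomy x hc₁ with h | hp1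
    · exact ⟨c₁, hc₁, h⟩
    rcases hT.adj_dist_dichotomy x hc₂ with h | hp2
    · exact ⟨c₂, hc₂, h⟩
    exact absurd (hT.parent_unique x hc₁.symm hc₂.symm hp1 hp2) hcc
  -- main induction
  have hclaim : ∀ N v, v ≠ x → H v ≤ N → v ∈ (zfStep T)^[N] B := by
    intro N
    induction N with
    | zero =>
      intro v hvx hHv
      by_cases hleaf : (T.neighborSet v).ncard = 1
      · have hvB : v ∈ B := ⟨hleaf, by simpa using hvx⟩
        simpa using hvB
      · exfalso
        obtain ⟨c, hvc, hdc⟩ := hchild v hvx hleaf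
        have hcD : c ∈ D v := by
          simp only [hD, Set.mem_setOf_eq]
          rw [SimpleGraph.dist_eq_one_iff_adj.mpr hvc]
          exact hdc
        have := hle v c hcD
        rw [SimpleGraph.dist_eq_one_iff_adj.mpr hvc] at this
        omega
    | succ N ih =>
      intro v hvx hHv
      by_cases hHN : H v ≤ N
      · exact zfStep_iterate_mono _ _ (Nat.le_succ N) (ih v hvx hHN)
      have hHv' : H v = N + 1 := by omega
      obtain ⟨w, hwD, hwd⟩ := hHmem v
      rw [hHv'] at hwd
      obtain ⟨c, hvc, hcw⟩ := exists_adj_dist hconn hwd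
      have hdvc : T.dist v c = 1 := SimpleGraph.dist_eq_one_iff_adj.mpr hvc
      have hxw : T.dist x w = T.dist x v + (N + 1) := by
        have := hwD
        simp only [hD, Set.mem_setOf_eq] at this
        omega
      have hxc : T.dist x c = T.dist x v + 1 := by
        have t1 : T.dist x c ≤ T.dist x v + T.dist v c := hconn.dist_triangle
        have t2 : T.dist x w ≤ T.dist x c + T.dist c w := hconn.dist_triangle
        omega
      have hcD : c ∈ D v := by
        simp only [hD, Set.mem_setOf_eq]
        omega
      have hcx : c ≠ x := by
        intro h
        rw [h, SimpleGraph.dist_self] at hxc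
        omega
      have hdescc : ∀ u ∈ D c, u ∈ D v ∧ T.dist v u = 1 + T.dist c u := by
        intro u hu
        obtain ⟨h1, h2⟩ := htrans v c u hcD hu
        exact ⟨h1, by omega⟩
      have hHc : H c ≤ N := by
        refine hHle c N ?_
        intro u hu
        obtain ⟨h1, h2⟩ := hdescc u hu
        have := hle v u h1
        omega
      have hcA := ih c hcx hHc
      rw [Function.iterate_succ_apply']
      refine Set.mem_union_right _ ?_
      refine ⟨c, hcA, hvc.symm, ?_⟩
      intro u hcu huA
      by_contra huv
      rcases hT.adj_dist_dichotomy x hcu with hch | hpar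
      · -- u is a child of c, hence deep descendant of v: it is black
        have hdcu : T.dist c u = 1 := SimpleGraph.dist_eq_one_iff_adj.mpr hcu
        have hux : u ≠ x := by
          intro h
          rw [h] at hch
          rw [SimpleGraph.dist_self] at hch
          omega
        have huDc : u ∈ D c := by
          simp only [hD, Set.mem_setOf_eq]
          omega
        have hHu : H u ≤ N := by
          refine hHle u N ?_
          intro z hz
          obtain ⟨hzDc, hdcz⟩ := (htrans c u z huDc hz)
          obtain ⟨hzDv, hdvz⟩ := hdescc z hzDc
          have := hle v z hzDv
          omega
        exact huA (ih u hux hHu)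
      · -- u would be a second parent of c
        exact huv (hT.parent_unique x hcu.symm hvc hpar hxc)
  -- conclude
  set M : ℕ := sSup (H '' Set.univ) with hM
  have hfinM : (H '' Set.univ).Finite := Set.toFinite _
  have hallM : ∀ v, v ≠ x → v ∈ (zfStep T)^[M] B := by
    intro v hvx
    refine hclaim M v hvx ?_
    exact le_csSup hfinM.bddAbove ⟨v, Set.mem_univ v, rfl⟩
  obtain ⟨c₀, hc₀⟩ := exists_adj_of_two_le_card hconn hn x
  refine ⟨M + 1, ?_⟩
  rw [Set.eq_univ_iff_forall]
  intro z
  by_cases hzx : z = x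
  · subst hzx
    rw [Function.iterate_succ_apply']
    refine Set.mem_union_right _ ?_
    refine ⟨c₀, hallM c₀ hc₀.ne', hc₀.symm, ?_⟩
    intro u hu hnu
    by_contra hux
    exact hnu (hallM u hux)
  · exact zfStep_iterate_mono _ _ (Nat.le_succ M) (hallM z hzx)

lemma leaf_count_le [Fintype V] {T : SimpleGraph V} (hT : T.IsTree)
    (hn : 2 ≤ Fintype.card V) (S : Set T.edgeSet)
    (hS : IsZeroForcingSet T.lineGraph S) :
    {v | (T.neighborSet v).ncard = 1}.ncard ≤ S.ncard + 1 := by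
  classical
  obtain ⟨m, hm⟩ := hS
  have hall : ∀ f : T.edgeSet, ∃ t, f ∈ (zfStep T.lineGraph)^[t] S := by
    intro f
    exact ⟨m, by rw [hm]; trivial⟩
  set τ : T.edgeSet → ℕ := fun f => Nat.find (hall f) with hτdef
  have key : ∀ f : T.edgeSet, f ∉ S → ∃ wv : V, wv ∈ (f : Sym2 V) ∧
      (∃ e : T.edgeSet, e ≠ f ∧ wv ∈ (e : Sym2 V)) ∧
      (∀ g : T.edgeSet, wv ∈ (g : Sym2 V) → g ≠ f → τ g < τ f) := by
    intro f hf
    have hτf : f ∈ (zfStep T.lineGraph)^[τ f] S := Nat.find_spec (hall f)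
    have hτ0 : τ f ≠ 0 := by
      intro h
      rw [h] at hτf
      exact hf hτf
    obtain ⟨k, hk⟩ : ∃ k, τ f = k + 1 := ⟨τ f - 1, by omega⟩
    have hmin : f ∉ (zfStep T.lineGraph)^[k] S := Nat.find_min (hall f) (by rw [show Nat.find (hall f) = τ f from rfl]; omega)
    rw [hk, Function.iterate_succ_apply'] at hτf
    rcases hτf with h | h
    · exact absurd h hmin
    obtain ⟨e, heA, headj, hforce⟩ := h
    rw [lineGraph_adj_iff_exists] at headj
    obtain ⟨hef, w, hwe, hwf⟩ := headj
    refine ⟨w, hwf, ⟨e, hef, hwe⟩, ?_⟩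
    intro g hwg hgf
    have hgk : g ∈ (zfStep T.lineGraph)^[k] S := by
      by_cases hge : g = e
      · rw [hge]; exact heA
      · by_contra hgA
        refine hgf (hforce g ?_ hgA)
        rw [lineGraph_adj_iff_exists]
        exact ⟨fun h => hge h.symm, w, hwe, hwg⟩
    have : τ g ≤ k := Nat.find_min' (hall g) hgk
    omega
  have ⟨x₀⟩ : Nonempty V := Fintype.card_pos_iff.mp (by omega)
  set φ : T.edgeSet → V := fun f =>
    if h : f ∉ S then (key f h).choose else x₀ with hφdef
  have hφ : ∀ f (h : f ∉ S), (φ f) ∈ (f : Sym2 V) ∧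
      (∃ e : T.edgeSet, e ≠ f ∧ (φ f) ∈ (e : Sym2 V)) ∧
      (∀ g : T.edgeSet, (φ f) ∈ (g : Sym2 V) → g ≠ f → τ g < τ f) := by
    intro f h
    have := (key f h).choose_spec
    simpa [hφdef, h] using this
  have hinj : Set.InjOn φ (Set.univ \ S) := by
    intro f₁ hf₁ f₂ hf₂ heq
    by_contra hne
    obtain ⟨h₁f, h₁e, h₁τ⟩ := hφ f₁ hf₁.2
    obtain ⟨h₂f, h₂e, h₂τ⟩ := hφ f₂ hf₂.2
    have t1 : τ f₂ < τ f₁ := h₁τ f₂ (by rw [← heq] at h₂f; exact h₂f) (Ne.symm hne)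
    have t2 : τ f₁ < τ f₂ := h₂τ f₁ (by rw [heq] at h₁f; exact h₁f) hne
    omega
  have himg : ∀ f ∈ (Set.univ \ S), φ f ∈ {v | (T.neighborSet v).ncard ≠ 1} := by
    intro f hf
    obtain ⟨hwf, ⟨e, hef, hwe⟩, -⟩ := hφ f hf.2
    set a := Sym2.Mem.other hwf with ha
    set b := Sym2.Mem.other hwe with hb
    have hsa : s(φ f, a) = (f : Sym2 V) := Sym2.other_spec hwf
    have hsb : s(φ f, b) = (e : Sym2 V) := Sym2.other_spec hwe
    have hab : a ≠ b := by
      intro h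
      apply hef
      apply Subtype.ext
      rw [← hsb, ← h, hsa]
    have haa : T.Adj (φ f) a := by
      rw [← SimpleGraph.mem_edgeSet, hsa]
      exact f.2
    have hbb : T.Adj (φ f) b := by
      rw [← SimpleGraph.mem_edgeSet, hsb]
      exact e.2
    have : 1 < (T.neighborSet (φ f)).ncard := by
      rw [Set.one_lt_ncard (Set.toFinite _)]
      exact ⟨a, haa, b, hbb, hab⟩
    simp only [Set.mem_setOf_eq]
    omega
  have h1 : (Set.univ \ S).ncard ≤ {v | (T.neighborSet v).ncard ≠ 1}.ncard :=
    Set.ncard_le_ncard_of_injOn φ himg hinj (Set.toFinite _)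
  have huniv : (Set.univ : Set T.edgeSet).ncard = Fintype.card V - 1 := by
    rw [Set.ncard_univ, Nat.card_coe_set_eq, Set.ncard_eq_toFinset_card']
    have := hT.card_edgeFinset
    rw [SimpleGraph.edgeFinset] at this
    omega
  have hdiff : (Set.univ \ S).ncard = (Set.univ : Set T.edgeSet).ncard - S.ncard :=
    Set.ncard_diff (Set.subset_univ S) (Set.toFinite _)
  have hScard : S.ncard ≤ (Set.univ : Set T.edgeSet).ncard :=
    Set.ncard_le_ncard (Set.subset_univ S) (Set.toFinite _)
  have hcomp : {v | (T.neighborSet v).ncard = 1}.ncard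
      + {v | (T.neighborSet v).ncard = 1}ᶜ.ncard = Fintype.card V := by
    rw [Set.ncard_add_ncard_compl, Nat.card_eq_fintype_card]
  have hco : {v | (T.neighborSet v).ncard = 1}ᶜ = {v | (T.neighborSet v).ncard ≠ 1} := by
    ext v
    simp
  rw [hco] at hcomp
  omega

lemma exists_leaf [Fintype V] {T : SimpleGraph V} (hT : T.IsTree)
    (hn : 2 ≤ Fintype.card V) : ∃ x, (T.neighborSet x).ncard = 1 := by
  classical
  by_contra h
  push_neg at h
  have hdeg : ∀ v : V, 2 ≤ T.degree v := by
    intro v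
    obtain ⟨c, hc⟩ := exists_adj_of_two_le_card hT.isConnected hn v
    have h1 : (T.neighborSet v).Nonempty := ⟨c, hc⟩
    have hpos : 0 < (T.neighborSet v).ncard := (Set.ncard_pos (Set.toFinite _)).mpr h1
    have hne := h v
    have hdeq : T.degree v = (T.neighborSet v).ncard := by
      rw [SimpleGraph.degree, SimpleGraph.neighborFinset, Set.ncard_eq_toFinset_card']
    omega
  have hsum := T.sum_degrees_eq_twice_card_edges
  have hcard := hT.card_edgeFinset
  have hge : Fintype.card V * 2 ≤ ∑ v, T.degree v := by
    calc Fintype.card V * 2 = ∑ _v : V, 2 := by rw [Finset.sum_const, Finset.card_univ]; ring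
    _ ≤ ∑ v, T.degree v := Finset.sum_le_sum fun v _ => hdeg v
  omega

end ZFHelpers

/-- For any tree `T` of order at least 2, `Z(T) ≤ Z(L(T))`. -/
theorem zeroForcingNum_le_zeroForcingNum_lineGraph_of_isTree {V : Type*} [Fintype V]
    (T : SimpleGraph V) (hT : T.IsTree) (hn : 2 ≤ Fintype.card V) :
    zeroForcingNum T ≤ zeroForcingNum T.lineGraph := by
  classical
  obtain ⟨x, hx⟩ := exists_leaf hT hn
  have hB : ({v | (T.neighborSet v).ncard = 1} \ {x}).ncard
      = {v | (T.neighborSet v).ncard = 1}.ncard - 1 :=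
    Set.ncard_diff_singleton_of_mem (s := {v | (T.neighborSet v).ncard = 1}) hx
  have hub : zeroForcingNum T ≤ {v | (T.neighborSet v).ncard = 1}.ncard - 1 :=
    Nat.sInf_le ⟨{v | (T.neighborSet v).ncard = 1} \ {x}, hB,
      leaves_minus_one_forcing hT hn x⟩
  have hne : {k | ∃ S : Set T.edgeSet, S.ncard = k ∧ IsZeroForcingSet T.lineGraph S}.Nonempty :=
    ⟨(Set.univ : Set T.edgeSet).ncard, Set.univ, rfl, ⟨0, by simp⟩⟩
  obtain ⟨S₀, hS₀card, hS₀⟩ := Nat.sInf_mem hne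
  have hlb : {v | (T.neighborSet v).ncard = 1}.ncard ≤ S₀.ncard + 1 :=
    leaf_count_le hT hn S₀ hS₀
  calc zeroForcingNum T ≤ {v | (T.neighborSet v).ncard = 1}.ncard - 1 := hub
    _ ≤ S₀.ncard := by omega
    _ = zeroForcingNum T.lineGraph := hS₀card
end

section
/- For every integer n ≥ 3, the zero forcing number of the wheel graph W_{1,n} equals 3: Z(W_{1,n}) = 3. -/
open SimpleGraph

variable {V : Type*}

namespace ZFWheel

lemma zfStep_mono {V : Type*} (G : SimpleGraph V) {S T : Set V} (h : S ⊆ T) :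
    zfStep G S ⊆ zfStep G T := by
  rintro v (hv | ⟨u, hu, hadj, hf⟩)
  · exact Or.inl (h hv)
  · exact Or.inr ⟨u, h hu, hadj, fun w hw hwT => hf w hw (fun hwS => hwT (h hwS))⟩

lemma subset_zfStep {V : Type*} (G : SimpleGraph V) (S : Set V) : S ⊆ zfStep G S :=
  Set.subset_union_left

lemma two_of_three {α : Type*} {S : Set α} (hfin : S.Finite) (hS : S.ncard ≤ 2) {u w1 w2 : α}
    (hu : u ∈ S) (h1 : w1 ≠ u) (h2 : w2 ≠ u) (h12 : w1 ≠ w2)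
    (hw1 : w1 ∈ S) (hw2 : w2 ∈ S) : False := by
  have hsub : ({u, w1, w2} : Set α) ⊆ S := by
    intro x hx; rcases hx with rfl | rfl | rfl <;> assumption
  have hc : ({u, w1, w2} : Set α).ncard = 3 := by
    rw [Set.ncard_insert_of_notMem (by simp [h1.symm, h2.symm, eq_comm]), Set.ncard_pair h12]
  have := Set.ncard_le_ncard hsub hfin
  omega

section
variable {n : ℕ} [NeZero n]

lemma cast_inj' {a b : ℕ} (ha : a < n) (hb : b < n) (h : (a : ZMod n) = b) : a = b := by
  have := congrArg ZMod.val h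
  rwa [ZMod.val_cast_of_lt ha, ZMod.val_cast_of_lt hb] at this

lemma fin_one_val (hn : 3 ≤ n) : ((1 : Fin n) : ℕ) = 1 := by
  simp [Fin.val_one', Nat.mod_eq_of_lt (by omega : 1 < n)]

lemma cast_add_one (hn : 3 ≤ n) (i : Fin n) :
    (((i + 1 : Fin n) : ℕ) : ZMod n) = ((i : ℕ) : ZMod n) + 1 := by
  rw [Fin.add_def]
  simp only [fin_one_val hn, ZMod.natCast_mod]
  push_cast; ring

lemma cast_sub_one (hn : 3 ≤ n) (i : Fin n) :
    (((i - 1 : Fin n) : ℕ) : ZMod n) = ((i : ℕ) : ZMod n) - 1 := by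
  rw [Fin.sub_def]
  simp only [fin_one_val hn, ZMod.natCast_mod]
  rw [Nat.cast_add, Nat.cast_sub (by omega : 1 ≤ n)]
  simp [ZMod.natCast_self]
  ring

lemma zmod_one_ne_zero (hn : 3 ≤ n) : (1 : ZMod n) ≠ 0 := by
  haveI : Fact (1 < n) := ⟨by omega⟩
  exact one_ne_zero

lemma zmod_two_ne_zero (hn : 3 ≤ n) : (2 : ZMod n) ≠ 0 := by
  intro h
  have h2 : ((2 : ℕ) : ZMod n) = ((0 : ℕ) : ZMod n) := by push_cast; exact h
  have := cast_inj' (by omega : 2 < n) (by omega : 0 < n) h2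
  omega

lemma wheel_adj_none (i : Fin n) : (wheelGraph n).Adj none (some i) := by
  simp [wheelGraph, SimpleGraph.fromRel_adj]

lemma wheel_adj_some (hn : 3 ≤ n) {i j : Fin n}
    (h : ((i : ℕ) : ZMod n) + 1 = ((j : ℕ) : ZMod n)) :
    (wheelGraph n).Adj (some i) (some j) := by
  have hne : i ≠ j := by
    rintro rfl
    exact zmod_one_ne_zero hn (by simpa using (left_eq_add.mp h.symm))
  simp only [wheelGraph, SimpleGraph.fromRel_adj]
  exact ⟨by simpa using hne, Or.inl h⟩

lemma wheel_adj_some_iff {i : Fin n} {w : Option (Fin n)} :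
    (wheelGraph n).Adj (some i) w ↔
      w = none ∨ ∃ k : Fin n, w = some k ∧ k ≠ i ∧
        (((i : ℕ) : ZMod n) + 1 = ((k : ℕ) : ZMod n) ∨
         ((k : ℕ) : ZMod n) + 1 = ((i : ℕ) : ZMod n)) := by
  match w with
  | none => simp [wheelGraph, SimpleGraph.fromRel_adj]
  | some k =>
    simp only [wheelGraph, SimpleGraph.fromRel_adj]
    constructor
    · rintro ⟨hne, h | h⟩
      · exact Or.inr ⟨k, rfl, fun h' => hne (by rw [h']), Or.inl h⟩
      · exact Or.inr ⟨k, rfl, fun h' => hne (by rw [h']), Or.inr h⟩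
    · rintro (h | ⟨k', hk', hne, h | h⟩)
      · exact absurd h (by simp)
      · obtain rfl : k' = k := by injection hk'.symm
        exact ⟨fun h' => hne (by injection h'.symm), Or.inl h⟩
      · obtain rfl : k' = k := by injection hk'.symm
        exact ⟨fun h' => hne (by injection h'.symm), Or.inr h⟩

/-- Upper bound: `{none, some 0, some 1}` is a zero forcing set. -/
lemma wheel_zf (hn : 3 ≤ n) :
    IsZeroForcingSet (wheelGraph n) {none, some 0, some 1} := by
  set G := wheelGraph n with hG
  set S : Set (Option (Fin n)) := {none, some 0, some 1} with hS
  have key : ∀ m : ℕ, ∀ x : Option (Fin n),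
      (x = none ∨ ∃ j : Fin n, x = some j ∧ (j : ℕ) < m + 2) →
      x ∈ (zfStep G)^[m] S := by
    intro m
    induction m with
    | zero =>
      rintro x (rfl | ⟨j, rfl, hj⟩)
      · exact Or.inl rfl
      · simp only [Function.iterate_zero, id]
        interval_cases hjv : (j : ℕ)
        · have : j = 0 := by
            apply Fin.ext; rw [hjv]; simp [Fin.val_zero]
          rw [this]; right; left; rfl
        · have : j = 1 := by
            apply Fin.ext; rw [hjv, fin_one_val hn]
          rw [this]; right; right; rfl
    | succ m ih =>
      rw [Function.iterate_succ_apply']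
      rintro x (rfl | ⟨j, rfl, hj⟩)
      · exact subset_zfStep G _ (ih none (Or.inl rfl))
      · by_cases hj2 : (j : ℕ) < m + 2
        · exact subset_zfStep G _ (ih (some j) (Or.inr ⟨j, rfl, hj2⟩))
        have hjm : (j : ℕ) = m + 2 := by omega
        have hmn : m + 2 < n := hjm ▸ j.isLt
        set i : Fin n := ⟨m + 1, by omega⟩ with hi
        refine Or.inr ⟨some i, ih (some i) (Or.inr ⟨i, rfl, by simp [hi]⟩), ?_, ?_⟩
        · apply wheel_adj_some hn
          show ((i : ℕ) : ZMod n) + 1 = ((j : ℕ) : ZMod n)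
          rw [hjm]; simp only [hi]; push_cast; ring
        · intro w hw hwS
          rcases wheel_adj_some_iff.mp hw with rfl | ⟨k, rfl, hki, hc | hc⟩
          · exact absurd (ih none (Or.inl rfl)) hwS
          · have : (k : ℕ) = m + 2 := by
              apply cast_inj' k.isLt hmn
              rw [← hc]; simp only [hi]; push_cast; ring
            congr 1
            exact Fin.ext (by rw [this, hjm])
          · exfalso
            apply hwS
            apply ih (some k)
            refine Or.inr ⟨k, rfl, ?_⟩
            have : (k : ℕ) = m := by
              apply cast_inj' k.isLt (by omega : m < n)
              have h2 : ((k : ℕ) : ZMod n) + 1 = ((m : ℕ) : ZMod n) + 1 := by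
                rw [hc]; simp only [hi]; push_cast; ring
              exact add_right_cancel h2
            omega
  refine ⟨n - 2, Set.eq_univ_of_forall fun x => ?_⟩
  apply key (n - 2) x
  match x with
  | none => exact Or.inl rfl
  | some j => exact Or.inr ⟨j, rfl, by have := j.isLt; omega⟩

/-- Lower bound: any set of at most 2 vertices is a fixed point of `zfStep`. -/
lemma wheel_zf_fixed (hn : 3 ≤ n) {S : Set (Option (Fin n))} (hS : S.ncard ≤ 2) :
    zfStep (wheelGraph n) S = S := by
  apply subset_antisymm _ (subset_zfStep _ _)
  rintro v (hv | ⟨u, hu, hadj, hf⟩)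
  · exact hv
  by_contra hvS
  obtain ⟨w1, w2, w3, a1, a2, a3, d12, d13, d23⟩ :
      ∃ w1 w2 w3 : Option (Fin n), (wheelGraph n).Adj u w1 ∧ (wheelGraph n).Adj u w2 ∧
        (wheelGraph n).Adj u w3 ∧ w1 ≠ w2 ∧ w1 ≠ w3 ∧ w2 ≠ w3 := by
    match u with
    | none =>
      refine ⟨some ⟨0, by omega⟩, some ⟨1, by omega⟩, some ⟨2, by omega⟩,
        wheel_adj_none _, wheel_adj_none _, wheel_adj_none _, ?_, ?_, ?_⟩ <;>
        simp [Fin.ext_iff]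
    | some i =>
      refine ⟨none, some (i + 1), some (i - 1),
        ((wheel_adj_none i).symm), ?_, ?_, by simp, by simp, ?_⟩
      · exact wheel_adj_some hn (by rw [cast_add_one hn i])
      · exact (wheel_adj_some hn (by rw [cast_sub_one hn i]; ring)).symm
      · intro h
        have h' : i + 1 = i - 1 := by injection h
        have hc : (((i + 1 : Fin n) : ℕ) : ZMod n) = (((i - 1 : Fin n) : ℕ) : ZMod n) := by
          rw [h']
        rw [cast_add_one hn, cast_sub_one hn] at hc
        exact zmod_two_ne_zero hn (by linear_combination hc)
  have hfin : S.Finite := Set.toFinite S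
  have n1 := a1.ne'
  have n2 := a2.ne'
  have n3 := a3.ne'
  by_cases h1 : w1 ∈ S <;> by_cases h2 : w2 ∈ S <;> by_cases h3 : w3 ∈ S
  · exact two_of_three hfin hS hu n1 n2 d12 h1 h2
  · exact two_of_three hfin hS hu n1 n2 d12 h1 h2
  · exact two_of_three hfin hS hu n1 n3 d13 h1 h3
  · exact d23 ((hf w2 a2 h2).trans (hf w3 a3 h3).symm)
  · exact two_of_three hfin hS hu n2 n3 d23 h2 h3
  · exact d13 ((hf w1 a1 h1).trans (hf w3 a3 h3).symm)
  · exact d12 ((hf w1 a1 h1).trans (hf w2 a2 h2).symm)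
  · exact d12 ((hf w1 a1 h1).trans (hf w2 a2 h2).symm)

end

end ZFWheel

/-- For every integer `n ≥ 3`, the zero forcing number of the wheel graph
`W_{1,n}` equals 3. -/


theorem zeroForcingNum_wheelGraph (n : ℕ) (hn : 3 ≤ n) :
    zeroForcingNum (wheelGraph n) = 3 := by
  haveI : NeZero n := ⟨by omega⟩
  apply le_antisymm
  · apply Nat.sInf_le
    refine ⟨{none, some 0, some 1}, ?_, ZFWheel.wheel_zf hn⟩
    rw [Set.ncard_insert_of_notMem (by simp), Set.ncard_pair (by
      simp only [ne_eq, Option.some.injEq]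
      intro h
      have := congrArg Fin.val h
      rw [Fin.val_zero, ZFWheel.fin_one_val hn] at this
      omega)]
  · apply le_csInf
    · exact ⟨3, {none, some 0, some 1}, by
        rw [Set.ncard_insert_of_notMem (by simp), Set.ncard_pair (by
          simp only [ne_eq, Option.some.injEq]
          intro h
          have := congrArg Fin.val h
          rw [Fin.val_zero, ZFWheel.fin_one_val hn] at this
          omega)], ZFWheel.wheel_zf hn⟩
    rintro k ⟨S, rfl, m, hm⟩
    by_contra hk
    push_neg at hk
    have hS2 : S.ncard ≤ 2 := by omega
    have hfix : (zfStep (wheelGraph n))^[m] S = S :=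
      Function.iterate_fixed (ZFWheel.wheel_zf_fixed hn hS2) m
    rw [hfix] at hm
    have : (Set.univ : Set (Option (Fin n))).ncard = n + 1 := by
      rw [Set.ncard_univ, Nat.card_eq_fintype_card, Fintype.card_option, Fintype.card_fin]
    rw [hm, this] at hS2
    omega
end
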